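/- arXiv:2006.14581 — 2 statements merged into one kernel-verified Lean document; each statement's English description precedes it below -/
import Mathlib

section
/- Existence of a real-valued extremal function with zero interval means and large integral (lower-bound lemma for recovery of the integral): Let ω be a concave modulus of continuity, a < b, n ∈ ℕ with n ≥ 1, h > 0, and let t₁, …, t_n satisfy a ≤ t₁ − h, t_i + h < t_{i+1} − h for i = 1, …, n−1, and t_n + h ≤ b. Then there exists a function f ∈ H^ω([a,b],ℝ) such that ∫_{t_i−h}^{t_i+h} f(t) dt = 0 for every i = 1, …, n and ∫_a^b f(t) dt ≥ 2n·(1 − 2nh/(b−a))·∫_0^{(b−a)/(2n)} ω(t) dt. -/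
open MeasureTheory Set

/-- A modulus of continuity: `ω 0 = 0`, continuous, non-decreasing and subadditive on `[0, ∞)`. -/
def IsModulus (ω : ℝ → ℝ) : Prop :=
  ω 0 = 0 ∧ ContinuousOn ω (Set.Ici 0) ∧ MonotoneOn ω (Set.Ici 0) ∧
    ∀ s t : ℝ, 0 ≤ s → 0 ≤ t → ω (s + t) ≤ ω s + ω t

/-- The class `H^ω([a,b], E)`. -/
def HHolder {E : Type*} [NormedAddCommGroup E] (ω : ℝ → ℝ) (a b : ℝ) (f : ℝ → E) : Prop :=
  ∀ s ∈ Set.Icc a b, ∀ t ∈ Set.Icc a b, ‖f t - f s‖ ≤ ω |t - s|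


set_option maxHeartbeats 1000000 in
/-- Existence of a real-valued extremal function with zero mean values over the intervals
`[tᵢ − h, tᵢ + h]`, `i = 1, …, n`, and large integral over `[a,b]` (concave modulus). -/
theorem extremal_zero_means_large_integral
    (ω : ℝ → ℝ) (hω : IsModulus ω) (hconc : ConcaveOn ℝ (Set.Ici 0) ω)
    (a b : ℝ) (hab : a < b) (n : ℕ) (hn : 0 < n) (h : ℝ) (hh : 0 < h)
    (t : ℕ → ℝ) (hta : a ≤ t 1 - h)
    (htsep : ∀ i, 1 ≤ i → i < n → t i + h < t (i + 1) - h)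
    (htb : t n + h ≤ b) :
    ∃ f : ℝ → ℝ, HHolder ω a b f ∧
      (∀ i, 1 ≤ i → i ≤ n → ∫ u in (t i - h)..(t i + h), f u = 0) ∧
      2 * (n : ℝ) * (1 - 2 * (n : ℝ) * h / (b - a)) *
          ∫ s in (0:ℝ)..((b - a) / (2 * (n : ℝ))), ω s ≤
        ∫ u in a..b, f u := by
  classical
  obtain ⟨hω0, hωcont, hωmono, hωsub⟩ := hω
  have hωnn : ∀ x : ℝ, 0 ≤ x → 0 ≤ ω x := by
    intro x hx
    have := hωmono (mem_Ici.2 le_rfl) (mem_Ici.2 hx) hx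
    rwa [hω0] at this
  -- geometry of the nodes
  have hgap : ∀ i j : ℕ, 1 ≤ i → i < j → j ≤ n → t i + h ≤ t j - h := by
    intro i j hi hij
    induction j, hij using Nat.le_induction with
    | base => intro hjn; exact (htsep i hi (by omega)).le
    | succ j hij ih =>
      intro hjn
      have h1 : t i + h ≤ t j - h := ih (by omega)
      have h2 := htsep j (by omega) (by omega)
      linarith
  have tmono : ∀ i j : ℕ, 1 ≤ i → i ≤ j → j ≤ n → t i ≤ t j := by
    intro i j hi hij hjn
    rcases eq_or_lt_of_le hij with rfl | hij'
    · exact le_rfl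
    · have := hgap i j hi hij' hjn; linarith
  have hchain : ∀ m : ℕ, 1 ≤ m → m ≤ n → 2 * h * ((m : ℝ) - 1) ≤ t m - t 1 := by
    intro m hm
    induction m, hm using Nat.le_induction with
    | base => intro _; norm_num
    | succ m hm ih =>
      intro hmn
      have h1 : 2 * h * ((m : ℝ) - 1) ≤ t m - t 1 := ih (by omega)
      have h2 := hgap m (m + 1) hm (by omega) hmn
      push_cast
      linarith
  have hn1 : (1 : ℝ) ≤ (n : ℝ) := by exact_mod_cast hn
  have hbapos : 0 < b - a := sub_pos.2 hab
  have h2nh : 2 * (n : ℝ) * h ≤ b - a := by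
    have h1 := hchain n hn le_rfl
    linarith
  set Δ : ℝ := (b - a) / (2 * (n : ℝ)) with hΔdef
  have hΔpos : 0 < Δ := div_pos hbapos (by positivity)
  have hhΔ : h ≤ Δ := by
    rw [hΔdef, le_div_iff₀ (by positivity)]
    linarith
  set lam : ℝ := h / Δ with hlamdef
  set mu : ℝ := 1 - lam with hmudef
  have hlampos : 0 < lam := div_pos hh hΔpos
  have hlamle : lam ≤ 1 := by rw [hlamdef, div_le_one hΔpos]; exact hhΔ
  have hmunn : 0 ≤ mu := by rw [hmudef]; linarith
  have hlamΔ : lam * Δ = h := by rw [hlamdef]; field_simp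
  have hmuΔ : mu * Δ = Δ - h := by
    have : mu * Δ = Δ - lam * Δ := by rw [hmudef]; ring
    rw [this, hlamΔ]
  set W : ℝ := ∫ s in (0:ℝ)..Δ, ω s with hWdef
  set cc : ℝ := lam ^ 2 * W / h with hccdef
  set F : ℝ → ℝ := fun x => cc + mu * ω (max (x - h) 0 / mu) - lam * ω (max (h - x) 0 / lam)
    with hFdef
  have hne : (Finset.Icc 1 n).Nonempty := ⟨1, by simp [Finset.mem_Icc]; omega⟩
  set d : ℝ → ℝ := fun u => (Finset.Icc 1 n).inf' hne (fun i => |u - t i|) with hddef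
  set f : ℝ → ℝ := fun u => F (d u) with hfdef
  clear_value f d F cc W mu lam Δ
  -- Jensen-type inequality
  have jensen : ∀ A B : ℝ, 0 ≤ A → 0 ≤ B →
      mu * ω (A / mu) + lam * ω (B / lam) ≤ ω (A + B) := by
    intro A B hA hB
    rcases eq_or_lt_of_le hmunn with hmu0 | hmupos
    · have hlam1 : lam = 1 := by rw [hmudef] at hmu0; linarith
      rw [← hmu0, hlam1]
      simp only [zero_mul, one_mul, div_one, zero_add]
      exact hωmono (mem_Ici.2 hB) (mem_Ici.2 (by linarith)) (by linarith)
    · have hj := hconc.2 (mem_Ici.2 (div_nonneg hA hmupos.le))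
        (mem_Ici.2 (div_nonneg hB hlampos.le)) hmupos.le hlampos.le
        (by rw [hmudef]; ring)
      simp only [smul_eq_mul] at hj
      have e : mu * (A / mu) + lam * (B / lam) = A + B := by
        field_simp
      rwa [e] at hj
  -- increment bound for F
  have hid : ∀ z : ℝ, max (z - h) 0 - max (h - z) 0 = z - h := by
    intro z
    rcases le_total z h with hz | hz
    · rw [max_eq_right (by linarith), max_eq_left (by linarith)]; ring
    · rw [max_eq_left (by linarith), max_eq_right (by linarith)]; ring
  have Fbound : ∀ x y : ℝ, F y - F x ≤ ω (max (y - x) 0) := by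
    intro x y
    set A : ℝ := max (max (y - h) 0 - max (x - h) 0) 0 with hAdef
    set B : ℝ := max (max (h - x) 0 - max (h - y) 0) 0 with hBdef
    have hA0 : 0 ≤ A := le_max_right _ _
    have hB0 : 0 ≤ B := le_max_right _ _
    have e1 : mu * ω (max (y - h) 0 / mu) - mu * ω (max (x - h) 0 / mu) ≤ mu * ω (A / mu) := by
      rcases eq_or_lt_of_le hmunn with hmu0 | hmupos
      · simp [← hmu0]
      · rcases le_total (max (y - h) 0) (max (x - h) 0) with hle | hle
        · have hA : A = 0 := max_eq_right (by linarith)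
          have hm := hωmono (mem_Ici.2 (div_nonneg (le_max_right _ _) hmunn))
            (mem_Ici.2 (div_nonneg (le_max_right _ _) hmunn))
            (div_le_div_of_nonneg_right hle hmupos.le)
          have := mul_le_mul_of_nonneg_left hm hmunn
          rw [hA, zero_div, hω0, mul_zero]
          linarith
        · have hAe : A = max (y - h) 0 - max (x - h) 0 := max_eq_left (by linarith)
          have hsub := hωsub (max (x - h) 0 / mu) (A / mu)
            (div_nonneg (le_max_right _ _) hmunn) (div_nonneg hA0 hmunn)
          have harg : max (x - h) 0 / mu + A / mu = max (y - h) 0 / mu := by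
            rw [hAe]; ring
          rw [harg] at hsub
          have := mul_le_mul_of_nonneg_left hsub hmunn
          rw [mul_add] at this
          linarith
    have e2 : lam * ω (max (h - x) 0 / lam) - lam * ω (max (h - y) 0 / lam)
        ≤ lam * ω (B / lam) := by
      rcases le_total (max (h - x) 0) (max (h - y) 0) with hle | hle
      · have hB : B = 0 := max_eq_right (by linarith)
        have hm := hωmono (mem_Ici.2 (div_nonneg (le_max_right _ _) hlampos.le))
          (mem_Ici.2 (div_nonneg (le_max_right _ _) hlampos.le))
          (div_le_div_of_nonneg_right hle hlampos.le)
        have := mul_le_mul_of_nonneg_left hm hlampos.le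
        rw [hB, zero_div, hω0, mul_zero]
        linarith
      · have hBe : B = max (h - x) 0 - max (h - y) 0 := max_eq_left (by linarith)
        have hsub := hωsub (max (h - y) 0 / lam) (B / lam)
          (div_nonneg (le_max_right _ _) hlampos.le) (div_nonneg hB0 hlampos.le)
        have harg : max (h - y) 0 / lam + B / lam = max (h - x) 0 / lam := by
          rw [hBe]; ring
        rw [harg] at hsub
        have := mul_le_mul_of_nonneg_left hsub hlampos.le
        rw [mul_add] at this
        linarith
    have e3 : A + B = max (y - x) 0 := by
      rcases le_total x y with hxy | hxy
      · have hρ : max (x - h) 0 ≤ max (y - h) 0 := max_le_max (by linarith) le_rfl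
        have hσ : max (h - y) 0 ≤ max (h - x) 0 := max_le_max (by linarith) le_rfl
        have hA' : A = max (y - h) 0 - max (x - h) 0 := max_eq_left (by linarith)
        have hB' : B = max (h - x) 0 - max (h - y) 0 := max_eq_left (by linarith)
        have hC' : max (y - x) 0 = y - x := max_eq_left (by linarith)
        rw [hA', hB', hC']
        have i1 := hid x
        have i2 := hid y
        linarith
      · have hρ : max (y - h) 0 ≤ max (x - h) 0 := max_le_max (by linarith) le_rfl
        have hσ : max (h - x) 0 ≤ max (h - y) 0 := max_le_max (by linarith) le_rfl
        have hA' : A = 0 := max_eq_right (by linarith)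
        have hB' : B = 0 := max_eq_right (by linarith)
        have hC' : max (y - x) 0 = 0 := max_eq_right (by linarith)
        rw [hA', hB', hC']
        norm_num
    have e4 := jensen A B hA0 hB0
    rw [e3] at e4
    simp only [hFdef]
    linarith
  have Fabs : ∀ x y r : ℝ, |y - x| ≤ r → |F y - F x| ≤ ω r := by
    intro x y r hr
    have h0r : 0 ≤ r := le_trans (abs_nonneg _) hr
    have l1 := Fbound x y
    have l2 := Fbound y x
    have hr2 : |x - y| ≤ r := by rw [abs_sub_comm]; exact hr
    have m1 : ω (max (y - x) 0) ≤ ω r := by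
      apply hωmono (mem_Ici.2 (le_max_right _ _)) (mem_Ici.2 h0r)
      exact max_le (le_trans (le_abs_self _) hr) h0r
    have m2 : ω (max (x - y) 0) ≤ ω r := by
      apply hωmono (mem_Ici.2 (le_max_right _ _)) (mem_Ici.2 h0r)
      exact max_le (le_trans (le_abs_self _) hr2) h0r
    rw [abs_le]
    constructor <;> linarith
  -- d is 1-Lipschitz and nonnegative
  have hd_le : ∀ u v : ℝ, d u ≤ d v + |u - v| := by
    intro u v
    obtain ⟨i, hi, hieq⟩ := Finset.exists_mem_eq_inf' hne (fun i => |v - t i|)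
    have h1 : d u ≤ |u - t i| := by rw [hddef]; exact Finset.inf'_le _ hi
    have h2 : |u - t i| ≤ |u - v| + |v - t i| := abs_sub_le u v (t i)
    have h3 : d v = |v - t i| := by rw [hddef]; exact hieq
    linarith
  have hd_lip : ∀ u v : ℝ, |d u - d v| ≤ |u - v| := by
    intro u v
    rw [abs_le]
    constructor
    · have := hd_le v u
      rw [abs_sub_comm] at this
      linarith
    · have := hd_le u v
      linarith
  -- HHolder property
  have hHolder : HHolder ω a b f := by
    intro s hs u hu
    rw [Real.norm_eq_abs]
    simp only [hfdef]
    exact Fabs (d s) (d u) _ (hd_lip u s)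
  -- continuity
  have hdcont : Continuous d := by
    have : LipschitzWith 1 d := by
      apply LipschitzWith.of_dist_le_mul
      intro u v
      rw [Real.dist_eq, Real.dist_eq, NNReal.coe_one, one_mul]
      exact hd_lip u v
    exact this.continuous
  have hFcont : Continuous F := by
    have c1 : Continuous fun x : ℝ => max (x - h) 0 / mu :=
      ((continuous_id.sub continuous_const).max continuous_const).div_const mu
    have c2 : Continuous fun x : ℝ => max (h - x) 0 / lam :=
      ((continuous_const.sub continuous_id).max continuous_const).div_const lam
    have o1 : Continuous fun x : ℝ => ω (max (x - h) 0 / mu) :=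
      hωcont.comp_continuous c1 (fun x => mem_Ici.2 (div_nonneg (le_max_right _ _) hmunn))
    have o2 : Continuous fun x : ℝ => ω (max (h - x) 0 / lam) :=
      hωcont.comp_continuous c2 (fun x => mem_Ici.2 (div_nonneg (le_max_right _ _) hlampos.le))
    rw [hFdef]
    exact (continuous_const.add (continuous_const.mul o1)).sub (continuous_const.mul o2)
  have hfcont : Continuous f := by
    rw [hfdef]; exact hFcont.comp hdcont
  have hfint : ∀ p q : ℝ, IntervalIntegrable f volume p q :=
    fun p q => hfcont.intervalIntegrable p q
  have hFint : ∀ p q : ℝ, IntervalIntegrable F volume p q :=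
    fun p q => hFcont.intervalIntegrable p q
  -- G h = 0
  have Ghz : (∫ s in (0:ℝ)..h, F s) = 0 := by
    have e0 : EqOn F (fun s => cc - lam * ω ((h - s) / lam)) (uIcc (0:ℝ) h) := by
      intro s hs
      rw [uIcc_of_le hh.le] at hs
      simp only [hFdef]
      have m1 : max (s - h) 0 = 0 := max_eq_right (by linarith [hs.2])
      have m2 : max (h - s) 0 = h - s := max_eq_left (by linarith [hs.2])
      rw [m1, m2, zero_div, hω0, mul_zero, add_zero]
    rw [intervalIntegral.integral_congr e0]
    have hint2 : IntervalIntegrable (fun s => lam * ω ((h - s) / lam)) volume 0 h := by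
      apply ContinuousOn.intervalIntegrable
      apply ContinuousOn.mul continuousOn_const
      apply hωcont.comp
      · exact ((continuous_const.sub continuous_id).div_const lam).continuousOn
      · intro s hs
        rw [uIcc_of_le hh.le] at hs
        exact mem_Ici.2 (div_nonneg (by linarith [hs.2]) hlampos.le)
    rw [intervalIntegral.integral_sub intervalIntegrable_const hint2,
      intervalIntegral.integral_const, intervalIntegral.integral_const_mul]
    have ecomp : (∫ s in (0:ℝ)..h, ω ((h - s) / lam)) = ∫ x in (0:ℝ)..h, ω (x / lam) := by
      have := intervalIntegral.integral_comp_sub_left (a := (0:ℝ)) (b := h)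
        (fun x => ω (x / lam)) h
      simpa using this
    rw [ecomp, intervalIntegral.integral_comp_div (f := ω) (ne_of_gt hlampos)]
    have hb1 : h / lam = Δ := by
      rw [hlamdef]; field_simp
    have hb0 : (0:ℝ) / lam = 0 := zero_div _
    rw [hb0, hb1, ← hWdef, smul_eq_mul, hccdef]
    field_simp
    ring
  -- G Δ = mu * W
  have GΔeq : (∫ s in (0:ℝ)..Δ, F s) = mu * W := by
    have hsplit := intervalIntegral.integral_add_adjacent_intervals (hFint 0 h) (hFint h Δ)
    have e0 : EqOn F (fun s => cc + mu * ω ((s - h) / mu)) (uIcc h Δ) := by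
      intro s hs
      rw [uIcc_of_le hhΔ] at hs
      simp only [hFdef]
      have m1 : max (h - s) 0 = 0 := max_eq_right (by linarith [hs.1])
      have m2 : max (s - h) 0 = s - h := max_eq_left (by linarith [hs.1])
      rw [m1, m2, zero_div, hω0, mul_zero, sub_zero]
    have hint2 : IntervalIntegrable (fun s => mu * ω ((s - h) / mu)) volume h Δ := by
      apply ContinuousOn.intervalIntegrable
      apply ContinuousOn.mul continuousOn_const
      apply hωcont.comp
      · exact ((continuous_id.sub continuous_const).div_const mu).continuousOn
      · intro s hs
        rw [uIcc_of_le hhΔ] at hs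
        exact mem_Ici.2 (div_nonneg (by linarith [hs.1]) hmunn)
    have e2 : (∫ s in h..Δ, F s) = cc * (Δ - h) + mu * ∫ s in h..Δ, ω ((s - h) / mu) := by
      rw [intervalIntegral.integral_congr e0,
        intervalIntegral.integral_add intervalIntegrable_const hint2,
        intervalIntegral.integral_const, intervalIntegral.integral_const_mul]
      rw [smul_eq_mul]
      ring
    have e3 : mu * (∫ s in h..Δ, ω ((s - h) / mu)) = mu ^ 2 * W := by
      rcases eq_or_lt_of_le hmunn with hmu0 | hmupos
      · rw [← hmu0]; norm_num
      · have ecomp : (∫ s in h..Δ, ω ((s - h) / mu)) = ∫ x in (0:ℝ)..(Δ - h), ω (x / mu) := by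
          have := intervalIntegral.integral_comp_sub_right (a := h) (b := Δ)
            (fun x => ω (x / mu)) h
          simpa using this
        rw [ecomp, intervalIntegral.integral_comp_div (f := ω) (ne_of_gt hmupos)]
        have hb1 : (Δ - h) / mu = Δ := by
          rw [← hmuΔ]; field_simp
        rw [zero_div, hb1, ← hWdef, smul_eq_mul]
        ring
    have e4 : cc * (Δ - h) = lam * mu * W := by
      rw [hccdef, ← hmuΔ, ← hlamΔ]
      field_simp
    have hsum : lam + mu = 1 := by rw [hmudef]; ring
    have : (∫ s in (0:ℝ)..Δ, F s) = lam * mu * W + mu ^ 2 * W := by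
      rw [← hsplit, Ghz, e2, zero_add, e4, e3]
    rw [this]
    linear_combination (mu * W) * hsum
  -- monotonicity of F on [h, ∞)
  have Fmono : ∀ x y : ℝ, h ≤ x → x ≤ y → F x ≤ F y := by
    intro x y hx hxy
    simp only [hFdef]
    have m1 : max (h - x) 0 = 0 := max_eq_right (by linarith)
    have m2 : max (h - y) 0 = 0 := max_eq_right (by linarith)
    rw [m1, m2, zero_div, hω0, mul_zero, sub_zero, sub_zero]
    have hmax : max (x - h) 0 ≤ max (y - h) 0 := max_le_max (by linarith) le_rfl
    have hdiv : max (x - h) 0 / mu ≤ max (y - h) 0 / mu := by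
      rw [div_eq_mul_inv, div_eq_mul_inv]
      exact mul_le_mul_of_nonneg_right hmax (inv_nonneg.2 hmunn)
    have hm := hωmono (mem_Ici.2 (div_nonneg (le_max_right _ _) hmunn))
      (mem_Ici.2 (div_nonneg (le_max_right _ _) hmunn)) hdiv
    have := mul_le_mul_of_nonneg_left hm hmunn
    linarith
  -- tangent line bound
  have tangent : ∀ y : ℝ, h ≤ y →
      mu * W + F Δ * (y - Δ) ≤ ∫ s in (0:ℝ)..y, F s := by
    intro y hy
    have hsplit := intervalIntegral.integral_add_adjacent_intervals (hFint 0 Δ) (hFint Δ y)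
    rcases le_total Δ y with hΔy | hΔy
    · have hmono := intervalIntegral.integral_mono_on (f := fun _ => F Δ) (g := F)
        (μ := volume) hΔy intervalIntegrable_const
        (hFint Δ y) (fun s hs => Fmono Δ s hhΔ hs.1)
      rw [intervalIntegral.integral_const, smul_eq_mul] at hmono
      have := GΔeq
      nlinarith [hsplit, hmono]
    · have hmono := intervalIntegral.integral_mono_on (f := F) (g := fun _ => F Δ)
        (μ := volume) hΔy (hFint y Δ)
        intervalIntegrable_const (fun s hs => Fmono s Δ (le_trans hy hs.1) hs.2)
      rw [intervalIntegral.integral_const, smul_eq_mul] at hmono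
      have hsymm : (∫ s in Δ..y, F s) = -∫ s in y..Δ, F s :=
        intervalIntegral.integral_symm y Δ
      nlinarith [hsplit, hmono, GΔeq, hsymm]
  -- evaluation of d on various intervals
  have dval : ∀ (i : ℕ) (u : ℝ), i ∈ Finset.Icc 1 n →
      (∀ j, j ∈ Finset.Icc 1 n → |u - t i| ≤ |u - t j|) → d u = |u - t i| := by
    intro i u hi hdom
    simp only [hddef]
    exact le_antisymm (Finset.inf'_le _ hi) (Finset.le_inf' _ _ hdom)
  have dwin : ∀ i : ℕ, 1 ≤ i → i ≤ n →
      ∀ u ∈ Icc (t i - h) (t i + h), d u = |u - t i| := by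
    intro i h1 h2 u hu
    apply dval i u (Finset.mem_Icc.2 ⟨h1, h2⟩)
    intro j hj
    rw [Finset.mem_Icc] at hj
    have habs : |u - t i| ≤ h := abs_le.2 ⟨by linarith [hu.1], by linarith [hu.2]⟩
    rcases lt_trichotomy j i with hji | rfl | hij
    · have hg := hgap j i hj.1 hji h2
      have he : |u - t j| = u - t j := abs_of_nonneg (by linarith [hu.1])
      rw [he]; linarith [hu.1]
    · exact le_rfl
    · have hg := hgap i j h1 hij hj.2
      have he : |u - t j| = -(u - t j) := abs_of_nonpos (by linarith [hu.2])
      rw [he]; linarith [hu.2]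
  have dleft : ∀ u ∈ Icc a (t 1), d u = t 1 - u := by
    intro u hu
    have e : d u = |u - t 1| := by
      apply dval 1 u (Finset.mem_Icc.2 ⟨le_rfl, hn⟩)
      intro j hj
      rw [Finset.mem_Icc] at hj
      have h1j : t 1 ≤ t j := tmono 1 j le_rfl hj.1 hj.2
      rw [abs_of_nonpos (by linarith [hu.2] : u - t 1 ≤ 0),
        abs_of_nonpos (by linarith [hu.2] : u - t j ≤ 0)]
      linarith
    rw [e, abs_of_nonpos (by linarith [hu.2] : u - t 1 ≤ 0)]
    ring
  have dright : ∀ u ∈ Icc (t n) b, d u = u - t n := by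
    intro u hu
    have e : d u = |u - t n| := by
      apply dval n u (Finset.mem_Icc.2 ⟨hn, le_rfl⟩)
      intro j hj
      rw [Finset.mem_Icc] at hj
      have h1j : t j ≤ t n := tmono j n hj.1 hj.2 le_rfl
      rw [abs_of_nonneg (by linarith [hu.1] : 0 ≤ u - t n),
        abs_of_nonneg (by linarith [hu.1] : 0 ≤ u - t j)]
      linarith
    rw [e, abs_of_nonneg (by linarith [hu.1] : 0 ≤ u - t n)]
  have dmidL : ∀ k : ℕ, 1 ≤ k → k < n →
      ∀ u ∈ Icc (t k) ((t k + t (k + 1)) / 2), d u = u - t k := by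
    intro k hk1 hkn u hu
    have hkk : t k < t (k + 1) := by have := htsep k hk1 hkn; linarith
    have e : d u = |u - t k| := by
      apply dval k u (Finset.mem_Icc.2 ⟨hk1, hkn.le⟩)
      intro j hj
      rw [Finset.mem_Icc] at hj
      rcases le_or_gt j k with hjk | hjk
      · have h1j : t j ≤ t k := tmono j k hj.1 hjk hkn.le
        rw [abs_of_nonneg (by linarith [hu.1] : 0 ≤ u - t k),
          abs_of_nonneg (by linarith [hu.1] : 0 ≤ u - t j)]
        linarith
      · have h1j : t (k + 1) ≤ t j := tmono (k + 1) j (by omega) hjk hj.2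
        rw [abs_of_nonneg (by linarith [hu.1] : 0 ≤ u - t k),
          abs_of_nonpos (by linarith [hu.2] : u - t j ≤ 0)]
        linarith [hu.2]
    rw [e, abs_of_nonneg (by linarith [hu.1] : 0 ≤ u - t k)]
  have dmidR : ∀ k : ℕ, 1 ≤ k → k < n →
      ∀ u ∈ Icc ((t k + t (k + 1)) / 2) (t (k + 1)), d u = t (k + 1) - u := by
    intro k hk1 hkn u hu
    have hkk : t k < t (k + 1) := by have := htsep k hk1 hkn; linarith
    have e : d u = |u - t (k + 1)| := by
      apply dval (k + 1) u (Finset.mem_Icc.2 ⟨by omega, by omega⟩)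
      intro j hj
      rw [Finset.mem_Icc] at hj
      rcases le_or_gt j k with hjk | hjk
      · have h1j : t j ≤ t k := tmono j k hj.1 hjk hkn.le
        rw [abs_of_nonpos (by linarith [hu.2] : u - t (k + 1) ≤ 0),
          abs_of_nonneg (by linarith [hu.1] : 0 ≤ u - t j)]
        linarith [hu.1]
      · have h1j : t (k + 1) ≤ t j := tmono (k + 1) j (by omega) hjk hj.2
        rw [abs_of_nonpos (by linarith [hu.2] : u - t (k + 1) ≤ 0),
          abs_of_nonpos (by linarith [hu.2] : u - t j ≤ 0)]
        linarith
    rw [e, abs_of_nonpos (by linarith [hu.2] : u - t (k + 1) ≤ 0)]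
    ring
  -- window integrals vanish
  have winint : ∀ i : ℕ, 1 ≤ i → i ≤ n → (∫ u in (t i - h)..(t i + h), f u) = 0 := by
    intro i h1 h2
    have c1 : (∫ u in (t i - h)..(t i), f u) = ∫ s in (0:ℝ)..h, F s := by
      have e : EqOn f (fun u => F (t i - u)) (uIcc (t i - h) (t i)) := by
        intro u hu
        rw [uIcc_of_le (by linarith)] at hu
        have hu' : u ∈ Icc (t i - h) (t i + h) := ⟨hu.1, by linarith [hu.2]⟩
        simp only [hfdef]
        rw [dwin i h1 h2 u hu', abs_of_nonpos (by linarith [hu.2] : u - t i ≤ 0), neg_sub]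
      rw [intervalIntegral.integral_congr e,
        intervalIntegral.integral_comp_sub_left F (t i)]
      norm_num
    have c2 : (∫ u in (t i)..(t i + h), f u) = ∫ s in (0:ℝ)..h, F s := by
      have e : EqOn f (fun u => F (u - t i)) (uIcc (t i) (t i + h)) := by
        intro u hu
        rw [uIcc_of_le (by linarith)] at hu
        have hu' : u ∈ Icc (t i - h) (t i + h) := ⟨by linarith [hu.1], hu.2⟩
        simp only [hfdef]
        rw [dwin i h1 h2 u hu', abs_of_nonneg (by linarith [hu.1] : 0 ≤ u - t i)]
      rw [intervalIntegral.integral_congr e,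
        intervalIntegral.integral_comp_sub_right F (t i)]
      norm_num
    have hadd := intervalIntegral.integral_add_adjacent_intervals
      (hfint (t i - h) (t i)) (hfint (t i) (t i + h))
    rw [c1, c2, Ghz] at hadd
    linarith [hadd]
  -- the three/many pieces of [a, b]
  have Ileft : (∫ u in a..(t 1), f u) = ∫ s in (0:ℝ)..(t 1 - a), F s := by
    have ha1 : a ≤ t 1 := by linarith
    have e : EqOn f (fun u => F (t 1 - u)) (uIcc a (t 1)) := by
      intro u hu
      rw [uIcc_of_le ha1] at hu
      simp only [hfdef]
      rw [dleft u hu]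
    rw [intervalIntegral.integral_congr e,
      intervalIntegral.integral_comp_sub_left F (t 1)]
    norm_num
  have Iright : (∫ u in (t n)..b, f u) = ∫ s in (0:ℝ)..(b - t n), F s := by
    have hnb : t n ≤ b := by linarith
    have e : EqOn f (fun u => F (u - t n)) (uIcc (t n) b) := by
      intro u hu
      rw [uIcc_of_le hnb] at hu
      simp only [hfdef]
      rw [dright u hu]
    rw [intervalIntegral.integral_congr e,
      intervalIntegral.integral_comp_sub_right F (t n)]
    norm_num
  have Imid : ∀ k : ℕ, 1 ≤ k → k < n →
      (∫ u in (t k)..(t (k + 1)), f u)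
        = 2 * ∫ s in (0:ℝ)..((t (k + 1) - t k) / 2), F s := by
    intro k hk1 hkn
    have hkk : t k < t (k + 1) := by
      have := htsep k hk1 hkn; linarith
    have hm1 : t k ≤ (t k + t (k + 1)) / 2 := by linarith
    have hm2 : (t k + t (k + 1)) / 2 ≤ t (k + 1) := by linarith
    have c1 : (∫ u in (t k)..((t k + t (k + 1)) / 2), f u)
        = ∫ s in (0:ℝ)..((t (k + 1) - t k) / 2), F s := by
      have e : EqOn f (fun u => F (u - t k)) (uIcc (t k) ((t k + t (k + 1)) / 2)) := by
        intro u hu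
        rw [uIcc_of_le hm1] at hu
        simp only [hfdef]
        rw [dmidL k hk1 hkn u hu]
      rw [intervalIntegral.integral_congr e,
        intervalIntegral.integral_comp_sub_right F (t k)]
      have b1 : t k - t k = (0:ℝ) := by ring
      have b2 : (t k + t (k + 1)) / 2 - t k = (t (k + 1) - t k) / 2 := by ring
      rw [b1, b2]
    have c2 : (∫ u in ((t k + t (k + 1)) / 2)..(t (k + 1)), f u)
        = ∫ s in (0:ℝ)..((t (k + 1) - t k) / 2), F s := by
      have e : EqOn f (fun u => F (t (k + 1) - u)) (uIcc ((t k + t (k + 1)) / 2) (t (k + 1))) := by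
        intro u hu
        rw [uIcc_of_le hm2] at hu
        simp only [hfdef]
        rw [dmidR k hk1 hkn u hu]
      rw [intervalIntegral.integral_congr e,
        intervalIntegral.integral_comp_sub_left F (t (k + 1))]
      have b1 : t (k + 1) - t (k + 1) = (0:ℝ) := by ring
      have b2 : t (k + 1) - (t k + t (k + 1)) / 2 = (t (k + 1) - t k) / 2 := by ring
      rw [b1, b2]
    have hadd := intervalIntegral.integral_add_adjacent_intervals
      (hfint (t k) ((t k + t (k + 1)) / 2)) (hfint ((t k + t (k + 1)) / 2) (t (k + 1)))
    rw [c1, c2] at hadd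
    linarith [hadd]
  -- induction over the middle part
  have middle : ∀ m : ℕ, 1 ≤ m → m ≤ n →
      2 * ((m : ℝ) - 1) * (mu * W) + F Δ * ((t m - t 1) - 2 * ((m : ℝ) - 1) * Δ)
        ≤ ∫ u in (t 1)..(t m), f u := by
    intro m hm
    induction m, hm using Nat.le_induction with
    | base =>
      intro _
      rw [intervalIntegral.integral_same]
      norm_num
    | succ m hm ih =>
      intro hmn
      have hmn' : m ≤ n := by omega
      have hmltn : m < n := by omega
      have hJ := ih hmn'
      have hseg := Imid m hm hmltn
      have hyh : h ≤ (t (m + 1) - t m) / 2 := by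
        have := htsep m hm hmltn; linarith
      have htan := tangent ((t (m + 1) - t m) / 2) hyh
      have hadd := intervalIntegral.integral_add_adjacent_intervals
        (hfint (t 1) (t m)) (hfint (t m) (t (m + 1)))
      push_cast
      nlinarith [hJ, hseg, htan, hadd]
  -- final assembly
  refine ⟨f, hHolder, winint, ?_⟩
  have hA := tangent (t 1 - a) (by linarith)
  have hB := tangent (b - t n) (by linarith)
  have hM := middle n hn le_rfl
  have s1 := intervalIntegral.integral_add_adjacent_intervals
    (hfint a (t 1)) (hfint (t 1) (t n))
  have s2 := intervalIntegral.integral_add_adjacent_intervals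
    (hfint a (t n)) (hfint (t n) b)
  have hbaΔ : b - a = 2 * (n : ℝ) * Δ := by
    rw [hΔdef]; field_simp
  have hlameq : 2 * (n : ℝ) * h / (b - a) = lam := by
    rw [hlamdef, hΔdef]
    field_simp
  rw [hlameq, ← hmudef]
  have hba' : F Δ * (b - a) = F Δ * (2 * (n : ℝ) * Δ) := by rw [hbaΔ]
  linarith [hA, hB, hM, s1, s2, Ileft, Iright, hba']
end

section
/- Optimal recovery of the function from interval means on H^ω: Let ω be a modulus of continuity, E a nontrivial real Banach space, a < b, n ≥ 1, h > 0 with 2nh < b − a. Call knots t = (t₁,…,t_n) admissible if a ≤ t₁ − h, t_i + h < t_{i+1} − h for i = 1,…,n−1, and t_n + h ≤ b; for admissible t let I_t(f) = ( (1/(2h))∫_{t₁−h}^{t₁+h} f(u) du, …, (1/(2h))∫_{t_n−h}^{t_n+h} f(u) du ) ∈ Eⁿ. Then the infimum, over all admissible knots t and all maps Φ: Eⁿ → ([a,b] → E), of sup_{f ∈ H^ω([a,b],E)} sup_{u∈[a,b]} ‖f(u) − Φ(I_t(f))(u)‖ equals (1/(2h))·∫_{(b−a)/(2n)−h}^{(b−a)/(2n)+h}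 ω(u) du. The infimum is attained at the uniform knots t*_k = a + (2k−1)(b−a)/(2n), k = 1,…,n, together with the method Φ* given by Φ*(y₁,…,y_n)(u) = y_k for u ∈ [τ_k, τ_{k+1}], where τ₁ = a, τ_k = (t*_{k−1} + t*_k)/2 for k = 2,…,n, and τ_{n+1} = b. -/
open MeasureTheory Set

/-- Admissible knots `t₁, …, t_n`: `a ≤ t₁ − h`, `tᵢ + h < t_{i+1} − h`, `t_n + h ≤ b`. -/
def AdmKnots (a b h : ℝ) (n : ℕ) (t : ℕ → ℝ) : Prop :=
  a ≤ t 1 - h ∧ (∀ i, 1 ≤ i → i < n → t i + h < t (i + 1) - h) ∧ t n + h ≤ b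

/-- The information operator: mean values of `f` over the intervals `[tᵢ − h, tᵢ + h]`. -/
noncomputable def meanInfo {E : Type*} [NormedAddCommGroup E] [NormedSpace ℝ E]
    (h : ℝ) (n : ℕ) (t : ℕ → ℝ) (f : ℝ → E) : Fin n → E :=
  fun i => (1 / (2 * h)) • ∫ u in (t ((i : ℕ) + 1) - h)..(t ((i : ℕ) + 1) + h), f u

/-- The uniform knots `t*_k = a + (2k − 1)(b − a)/(2n)`, `k = 1, …, n`. -/
noncomputable def uniformKnots (a b : ℝ) (n : ℕ) : ℕ → ℝ :=
  fun k => a + (2 * (k : ℝ) - 1) * (b - a) / (2 * (n : ℝ))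

/-- The optimal method: `Φ*(y₁,…,y_n)(u) = y_k` for `u ∈ [τ_k, τ_{k+1}]`, where
`τ_k = a + (k−1)(b−a)/n` are the midpoints between consecutive uniform knots
(`τ₁ = a`, `τ_{n+1} = b`). -/
noncomputable def stepMethod {E : Type*} [NormedAddCommGroup E] [NormedSpace ℝ E]
    (a b : ℝ) (n : ℕ) (y : Fin n → E) (u : ℝ) : E :=
  if hn : 0 < n then y ⟨min (n - 1) ⌊(u - a) * n / (b - a)⌋₊, by omega⟩ else 0


/-- Extension of a modulus to all of `ℝ` by `0` on negatives. -/
noncomputable def Wmod (ω : ℝ → ℝ) : ℝ → ℝ := fun s => ω (max s 0)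

namespace Wmod

variable {ω : ℝ → ℝ}

lemma zeroval (hω : IsModulus ω) : Wmod ω 0 = 0 := by simp [Wmod, hω.1]

lemma eq_of_nonneg {s : ℝ} (hs : 0 ≤ s) : Wmod ω s = ω s := by
  simp [Wmod, max_eq_left hs]

lemma mono (hω : IsModulus ω) : Monotone (Wmod ω) := by
  intro x y hxy
  exact hω.2.2.1 (Set.mem_Ici.2 (le_max_right _ _)) (Set.mem_Ici.2 (le_max_right _ _)) (max_le_max hxy le_rfl)

lemma max0 (s : ℝ) : Wmod ω (max s 0) = Wmod ω s := by simp [Wmod, max_assoc]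

lemma nonneg (hω : IsModulus ω) (s : ℝ) : 0 ≤ Wmod ω s := by
  have h0 : Wmod ω 0 ≤ Wmod ω (max s 0) := mono hω (le_max_right s 0)
  rw [zeroval hω, max0] at h0; exact h0

lemma nonpos_val (hω : IsModulus ω) {s : ℝ} (hs : s ≤ 0) : Wmod ω s = 0 := by
  simp [Wmod, max_eq_right hs, hω.1]

lemma subadd (hω : IsModulus ω) (x y : ℝ) : Wmod ω (x + y) ≤ Wmod ω x + Wmod ω y := by
  have h1 : max (x + y) 0 ≤ max x 0 + max y 0 := by
    rcases le_total (x+y) 0 with hc | hc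
    · simp [max_eq_right hc]; positivity
    · rw [max_eq_left hc]; exact add_le_add (le_max_left _ _) (le_max_left _ _)
  calc Wmod ω (x + y) = ω (max (x+y) 0) := rfl
    _ ≤ ω (max x 0 + max y 0) := hω.2.2.1 (Set.mem_Ici.2 (le_max_right _ _)) (by have := le_max_right x 0; have := le_max_right y 0; simp [Set.mem_Ici]; linarith) h1
    _ ≤ ω (max x 0) + ω (max y 0) := hω.2.2.2 _ _ (le_max_right _ _) (le_max_right _ _)

lemma lip (hω : IsModulus ω) (x y : ℝ) : |Wmod ω x - Wmod ω y| ≤ Wmod ω (|x - y|) := by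
  rw [abs_sub_le_iff]
  constructor
  · have h1 := subadd hω y (x - y)
    have h2 := mono hω (le_abs_self (x - y))
    have e : y + (x - y) = x := by ring
    rw [e] at h1; linarith
  · have h1 := subadd hω x (y - x)
    have h2 := mono hω (le_abs_self (y - x))
    rw [abs_sub_comm] at h2
    have e : x + (y - x) = y := by ring
    rw [e] at h1; linarith

lemma cont (hω : IsModulus ω) : Continuous (Wmod ω) := by
  have : Continuous (fun s : ℝ => max s 0) := continuous_id.max continuous_const
  exact hω.2.1.comp_continuous this (fun x => Set.mem_Ici.2 (le_max_right _ _))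

end Wmod

section Glue
variable {ω : ℝ → ℝ}

/-- `H^ω` bound on a set, in terms of `Wmod`. -/
def HWOn (ω : ℝ → ℝ) (s : Set ℝ) (F : ℝ → ℝ) : Prop :=
  ∀ x ∈ s, ∀ y ∈ s, |F x - F y| ≤ Wmod ω (|x - y|)

lemma HWOn.mono_set {s s' : Set ℝ} {F : ℝ → ℝ} (hs : s' ⊆ s) (h : HWOn ω s F) : HWOn ω s' F :=
  fun x hx y hy => h x (hs hx) y (hs hy)

lemma glue_at_min (hω : IsModulus ω) {F : ℝ → ℝ} {A B e : ℝ} (hAe : A ≤ e) (heB : e ≤ B)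
    (h1 : HWOn ω (Icc A e) F) (h2 : HWOn ω (Icc e B) F)
    (hmin : ∀ y ∈ Icc A B, F e ≤ F y) :
    HWOn ω (Icc A B) F := by
  have key : ∀ x ∈ Icc A B, ∀ y ∈ Icc A B, x ≤ y → |F x - F y| ≤ Wmod ω (|x - y|) := by
    intro x hx y hy hxy
    rcases le_total y e with hc | hc
    · exact h1 x ⟨hx.1, le_trans hxy hc⟩ y ⟨hy.1, hc⟩
    rcases le_total e x with hc2 | hc2
    · exact h2 x ⟨hc2, le_trans hxy hy.2⟩ y ⟨le_trans hc2 hxy, hy.2⟩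
    · -- x ≤ e ≤ y
      have hxe : x ∈ Icc A e := ⟨hx.1, hc2⟩
      have hye : y ∈ Icc e B := ⟨hc, hy.2⟩
      have b1 : F x - F y ≤ Wmod ω (|x - y|) := by
        have : F x - F e ≤ Wmod ω (|x - e|) := le_trans (le_abs_self _) (h1 x hxe e ⟨hAe, le_refl e⟩)
        have hm : Wmod ω (|x - e|) ≤ Wmod ω (|x - y|) := by
          apply Wmod.mono hω
          rw [abs_sub_comm x e, abs_sub_comm x y, abs_of_nonneg (by linarith), abs_of_nonneg (by linarith)]
          linarith
        have := hmin y hy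
        linarith
      have b2 : F y - F x ≤ Wmod ω (|x - y|) := by
        have : F y - F e ≤ Wmod ω (|y - e|) := le_trans (le_abs_self _) (h2 y hye e ⟨le_refl e, heB⟩)
        have hm : Wmod ω (|y - e|) ≤ Wmod ω (|x - y|) := by
          apply Wmod.mono hω
          rw [abs_sub_comm x y, abs_of_nonneg (by linarith), abs_of_nonneg (by linarith)]
          linarith
        have := hmin x hx
        linarith
      rw [abs_sub_le_iff]; exact ⟨b1, b2⟩
  intro x hx y hy
  rcases le_total x y with hc | hc
  · exact key x hx y hy hc
  · rw [abs_sub_comm]; rw [abs_sub_comm x y]; exact key y hy x hx hc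

end Glue

section IntUtil
variable {ω : ℝ → ℝ}

lemma intble_W_comp (hω : IsModulus ω) {g : ℝ → ℝ} (hg : Continuous g) (A B : ℝ) :
    IntervalIntegrable (fun u => Wmod ω (g u)) volume A B :=
  ((Wmod.cont hω).comp hg).intervalIntegrable A B

lemma int_shift_le (hω : IsModulus ω) {A B τ : ℝ} (hAB : A ≤ B) (hτ : 0 ≤ τ) :
    ∫ s in (A-τ)..(B-τ), Wmod ω s ≤ ∫ s in A..B, Wmod ω s := by
  have e1 : ∫ s in (A-τ)..(B-τ), Wmod ω s = ∫ s in A..B, Wmod ω (s - τ) := by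
    rw [intervalIntegral.integral_comp_sub_right (Wmod ω) τ]
  rw [e1]
  apply intervalIntegral.integral_mono_on hAB
    (intble_W_comp hω (continuous_id.sub continuous_const) A B)
    ((Wmod.cont hω).intervalIntegrable A B)
  intro x _
  simpa using Wmod.mono hω (show x - τ ≤ x by linarith)

lemma int_W_window (hω : IsModulus ω) (r L : ℝ) :
    ∫ s in (0:ℝ)..L, Wmod ω (r - s) = ∫ s in (r-L)..r, Wmod ω s := by
  rw [intervalIntegral.integral_comp_sub_left (Wmod ω) r]
  norm_num

/-- continuity of a parametric integral with `Wmod`-modulus dependence. -/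
lemma cont_param_integral (hω : IsModulus ω) {e p : ℝ} (hep : e ≤ p) (G : ℝ → ℝ → ℝ)
    (hGc : ∀ σ, Continuous (G σ)) (hlip : ∀ σ₁ σ₂ u, |G σ₁ u - G σ₂ u| ≤ |σ₁ - σ₂|) :
    Continuous (fun σ => ∫ u in e..p, Wmod ω (G σ u)) := by
  rw [Metric.continuous_iff]
  intro σ ε hε
  have hWc : ContinuousAt (Wmod ω) 0 := (Wmod.cont hω).continuousAt
  rw [Metric.continuousAt_iff] at hWc
  have hpe1 : (0:ℝ) < p - e + 1 := by linarith
  obtain ⟨d, hd, hball⟩ := hWc (ε / (p - e + 1)) (div_pos hε hpe1)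
  refine ⟨d, hd, fun σ' hσ' => ?_⟩
  have key : ∀ u, |Wmod ω (G σ' u) - Wmod ω (G σ u)| ≤ Wmod ω |σ' - σ| := by
    intro u
    refine le_trans (Wmod.lip hω _ _) (Wmod.mono hω (le_trans (hlip _ _ _) (le_refl _)))
  have hWd : Wmod ω |σ' - σ| < ε / (p - e + 1) := by
    have := hball (x := |σ' - σ|) (by
      rw [Real.dist_eq]; simpa using lt_of_abs_lt (by rwa [abs_abs, ← Real.dist_eq]))
    rw [Real.dist_eq, Wmod.zeroval hω, sub_zero] at this
    exact lt_of_abs_lt this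
  have i1 : IntervalIntegrable (fun u => Wmod ω (G σ' u)) volume e p := intble_W_comp hω (hGc σ') e p
  have i2 : IntervalIntegrable (fun u => Wmod ω (G σ u)) volume e p := intble_W_comp hω (hGc σ) e p
  rw [Real.dist_eq, ← intervalIntegral.integral_sub i1 i2]
  calc |∫ u in e..p, (Wmod ω (G σ' u) - Wmod ω (G σ u))|
      ≤ ∫ u in e..p, |Wmod ω (G σ' u) - Wmod ω (G σ u)| := by
        apply intervalIntegral.abs_integral_le_integral_abs hep
    _ ≤ ∫ u in e..p, Wmod ω |σ' - σ| := by
        apply intervalIntegral.integral_mono_on hep (i1.sub i2).abs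
          (intervalIntegrable_const)
        intro x _; exact key x
    _ = (p - e) * Wmod ω |σ' - σ| := by rw [intervalIntegral.integral_const, smul_eq_mul]
    _ < ε := by
        have hWn : 0 ≤ Wmod ω |σ' - σ| := Wmod.nonneg hω _
        have h1 : (p - e) * Wmod ω |σ' - σ| ≤ (p - e + 1) * Wmod ω |σ' - σ| := by nlinarith
        have h2 : (p - e + 1) * Wmod ω |σ' - σ| < (p - e + 1) * (ε / (p - e + 1)) :=
          mul_lt_mul_of_pos_left hWd hpe1
        have h3 : (p - e + 1) * (ε / (p - e + 1)) = ε := by field_simp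
        linarith
end IntUtil

lemma lip_one_sub (A : ℝ) : LipschitzWith 1 (fun u : ℝ => A - u) := by
  apply LipschitzWith.of_dist_le_mul
  intro x y
  rw [Real.dist_eq, Real.dist_eq, NNReal.coe_one, one_mul]
  have e : A - x - (A - y) = y - x := by ring
  rw [e, abs_sub_comm]

lemma lip_one_sub' (A : ℝ) : LipschitzWith 1 (fun u : ℝ => u - A) := by
  apply LipschitzWith.of_dist_le_mul
  intro x y
  rw [Real.dist_eq, Real.dist_eq, NNReal.coe_one, one_mul]
  have e : x - A - (y - A) = x - y := by ring
  rw [e]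

/-- The main inductive construction: a nonnegative `1`-Lipschitz "distance profile" `ρ`
vanishing left of `P₀` whose `ω`-image has prescribed mean `γ` over each of the
intervals `[c i - h, c i + h]`, `i = 1, …, m`. -/
lemma chain_exists {ω : ℝ → ℝ} (hω : IsModulus ω) {h γ : ℝ} (hh : 0 < h) (hγ0 : 0 ≤ γ)
    (hγA : 2*h*γ ≤ ∫ s in (0:ℝ)..(2*h), Wmod ω s) (c : ℕ → ℝ) (m : ℕ) (P₀ : ℝ)
    (hsp : ∀ i, 1 ≤ i → i ≤ m → (if i = 1 then P₀ else c (i-1) + h) < c i - h) :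
    ∃ ρ : ℝ → ℝ, LipschitzWith 1 ρ ∧ (∀ u, 0 ≤ ρ u) ∧ (∀ u, u ≤ P₀ → ρ u = 0) ∧
      (∀ i, 1 ≤ i → i ≤ m → (∫ u in (c i - h)..(c i + h), Wmod ω (ρ u)) = 2*h*γ) ∧
      (∫ s in (0:ℝ)..(2*h), Wmod ω (ρ (if m = 0 then P₀ else c m + h) - s)) ≤ 2*h*γ ∧
      P₀ ≤ (if m = 0 then P₀ else c m + h) := by
  induction m with
  | zero =>
    refine ⟨fun _ => 0, LipschitzWith.const' 0 (K := 1), fun u => le_refl 0, fun u _ => rfl,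
      fun i h1 h2 => by omega, ?_, le_refl _⟩
    have : ∀ s ∈ uIcc (0:ℝ) (2*h), Wmod ω ((0:ℝ) - s) = 0 := by
      intro s hs
      rw [uIcc_of_le (by linarith)] at hs
      exact Wmod.nonpos_val hω (by have := hs.1; linarith)
    calc (∫ s in (0:ℝ)..(2*h), Wmod ω ((fun _ => (0:ℝ)) (if 0 = 0 then P₀ else c 0 + h) - s))
        = ∫ s in (0:ℝ)..(2*h), (0:ℝ) := by
          apply intervalIntegral.integral_congr; intro s hs; exact this s hs
      _ ≤ 2*h*γ := by rw [intervalIntegral.integral_zero]; positivity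
  | succ m IH =>
    obtain ⟨ρ, hlip, hnn, hfreeze, hmeans, hINV, hQle⟩ :=
      IH (fun i h1 h2 => hsp i h1 (le_trans h2 (Nat.le_succ m)))
    set P : ℝ := if m = 0 then P₀ else c m + h with hP
    set r : ℝ := ρ P with hr
    set e : ℝ := c (m+1) - h with he
    set p : ℝ := c (m+1) + h with hp
    have hrnn : 0 ≤ r := hnn P
    have hPe : P < e := by
      have := hsp (m+1) (by omega) (le_refl _)
      rcases Nat.eq_zero_or_pos m with hm | hm
      · subst hm; rw [if_pos rfl] at this; rw [hP, if_pos rfl]; exact this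
      · rw [if_neg (by omega), Nat.add_sub_cancel] at this
        rw [hP, if_neg (by omega)]; exact this
    have hep : e ≤ p := by rw [he, hp]; linarith
    have hpe2 : p = e + 2*h := by rw [he, hp]; ring
    -- the "descend from the past" part
    set D₀ : ℝ → ℝ := fun u => max (min (ρ u) (r + (P - u))) 0 with hD₀
    have hD₀lip : LipschitzWith 1 D₀ := by
      have h1 : LipschitzWith 1 (fun u : ℝ => r + (P - u)) := by
        simpa [add_sub_assoc] using lip_one_sub (r + P)
      have := (hlip.min h1).max (LipschitzWith.const' 0 (K := 1))
      simpa using this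
    have hD₀nn : ∀ u, 0 ≤ D₀ u := fun u => le_max_right _ _
    have hD₀eq : ∀ u, u ≤ P → D₀ u = ρ u := by
      intro u hu
      have hd : |ρ u - ρ P| ≤ |u - P| := by
        have := hlip.dist_le_mul u P
        simpa [Real.dist_eq] using this
      have : ρ u ≤ r + (P - u) := by
        rw [abs_sub_le_iff] at hd
        have h2 := hd.1
        rw [abs_of_nonpos (by linarith)] at h2
        rw [hr]; linarith
      show min (ρ u) (r + (P - u)) ⊔ 0 = ρ u
      rw [min_eq_left this]
      exact max_eq_left (hnn u)
    have hD₀le : ∀ u, D₀ u ≤ max (r + (P - u)) 0 :=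
      fun u => max_le_max (min_le_right _ _) (le_refl 0)
    -- the one-parameter family of extensions
    set R : ℝ → ℝ → ℝ := fun σ u => max (D₀ u) (u - σ) with hR
    have hRlipu : ∀ σ, LipschitzWith 1 (R σ) := fun σ => by
      simpa using hD₀lip.max (lip_one_sub' σ)
    have hRcont : ∀ σ, Continuous (R σ) := fun σ => (hRlipu σ).continuous
    have hRlipσ : ∀ σ₁ σ₂ u, |R σ₁ u - R σ₂ u| ≤ |σ₁ - σ₂| := by
      intro σ₁ σ₂ u
      rw [hR]
      simp only [max_comm (D₀ u)]
      calc |max (u - σ₁) (D₀ u) - max (u - σ₂) (D₀ u)| ≤ |(u - σ₁) - (u - σ₂)| :=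
            abs_max_sub_max_le_abs _ _ _
        _ = |σ₁ - σ₂| := by rw [show (u - σ₁) - (u - σ₂) = -(σ₁ - σ₂) by ring, abs_neg]
    have hRnn : ∀ σ u, 0 ≤ R σ u := fun σ u => le_trans (hD₀nn u) (le_max_left _ _)
    have hReq : ∀ σ, e ≤ σ → ∀ u, u ≤ P → R σ u = ρ u := by
      intro σ hσ u hu
      have huσ : u - σ ≤ 0 := by linarith
      show max (D₀ u) (u - σ) = ρ u
      rw [max_eq_left (le_trans huσ (hD₀nn u))]
      exact hD₀eq u hu
    set M : ℝ → ℝ := fun σ => ∫ u in e..p, Wmod ω (R σ u) with hM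
    have hMcont : Continuous M := cont_param_integral hω hep R hRcont hRlipσ
    have hMe : 2*h*γ ≤ M e := by
      have comp : ∀ u ∈ uIcc e p, Wmod ω (u - e) ≤ Wmod ω (R e u) :=
        fun u _ => Wmod.mono hω (le_max_right _ _)
      have : (∫ u in e..p, Wmod ω (u - e)) ≤ M e := by
        apply intervalIntegral.integral_mono_on hep
          (intble_W_comp hω (continuous_id.sub continuous_const) e p)
          (intble_W_comp hω (hRcont e) e p)
        intro u hu; exact comp u (by rw [uIcc_of_le hep]; exact hu)
      have e2 : (∫ u in e..p, Wmod ω (u - e)) = ∫ s in (0:ℝ)..(2*h), Wmod ω s := by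
        rw [intervalIntegral.integral_comp_sub_right (Wmod ω) e]
        norm_num [hpe2]
      linarith [hγA]
    have hMp : M p ≤ 2*h*γ := by
      have comp : ∀ u ∈ uIcc e p, Wmod ω (R p u) ≤ Wmod ω (r + P - u) := by
        intro u hu
        rw [uIcc_of_le hep] at hu
        have h1 : R p u = D₀ u := by
          rw [hR]
          exact max_eq_left (le_trans (by linarith [hu.2] : u - p ≤ 0) (hD₀nn u))
        rw [h1]
        calc Wmod ω (D₀ u) ≤ Wmod ω (max (r + (P - u)) 0) := Wmod.mono hω (hD₀le u)
          _ = Wmod ω (r + (P - u)) := Wmod.max0 _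
          _ = Wmod ω (r + P - u) := by ring_nf
      have step1 : M p ≤ ∫ u in e..p, Wmod ω (r + P - u) := by
        apply intervalIntegral.integral_mono_on hep
          (intble_W_comp hω (hRcont p) e p)
          (intble_W_comp hω (continuous_const.sub continuous_id) e p)
        intro u hu; exact comp u (by rw [uIcc_of_le hep]; exact hu)
      have step2 : (∫ u in e..p, Wmod ω (r + P - u)) = ∫ s in (r+P-p)..(r+P-e), Wmod ω s := by
        rw [intervalIntegral.integral_comp_sub_left (Wmod ω) (r+P)]
      have step3 : (∫ s in (r+P-p)..(r+P-e), Wmod ω s) ≤ ∫ s in (r-2*h)..r, Wmod ω s := by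
        have hτ : (0:ℝ) ≤ e - P := by linarith
        have := int_shift_le hω (A := r - 2*h) (B := r) (τ := e - P) (by linarith) hτ
        have e1 : r - 2*h - (e - P) = r + P - p := by rw [hpe2]; ring
        have e2 : r - (e - P) = r + P - e := by ring
        rwa [e1, e2] at this
      have step4 : (∫ s in (r-2*h)..r, Wmod ω s) ≤ 2*h*γ := by
        rw [← int_W_window hω r (2*h)]
        exact hINV
      linarith
    -- Intermediate value theorem
    have hIVT : (2*h*γ) ∈ M '' (Icc e p) := by
      apply intermediate_value_Icc' hep hMcont.continuousOn
      exact ⟨hMp, hMe⟩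
    obtain ⟨σ, hσmem, hMσ⟩ := hIVT
    refine ⟨R σ, hRlipu σ, hRnn σ, ?_, ?_, ?_, ?_⟩
    · intro u hu
      rw [hReq σ hσmem.1 u (le_trans hu hQle)]
      exact hfreeze u hu
    · -- means
      have cmono : ∀ i, 1 ≤ i → i ≤ m → c i + h ≤ P := by
        intro i h1 h2
        have hm : 1 ≤ m := le_trans h1 h2
        rw [hP, if_neg (by omega)]
        have step : ∀ k, 1 ≤ k → k + 1 ≤ m → c k ≤ c (k+1) := by
          intro k hk1 hk2
          have := hsp (k+1) (by omega) (by omega)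
          rw [if_neg (by omega), Nat.add_sub_cancel] at this
          linarith
        have mono2 : ∀ d k, 1 ≤ k → k + d ≤ m → c k ≤ c (k + d) := by
          intro d
          induction d with
          | zero => intro k _ _; simp
          | succ d IH2 =>
            intro k hk1 hkd
            have e1 : k + (d+1) = (k+d) + 1 := by omega
            rw [e1]
            have h1' := IH2 k hk1 (by omega)
            have h2' := step (k+d) (by omega) (by omega)
            linarith
        have hmi := mono2 (m - i) i h1 (by omega)
        have e2 : i + (m - i) = m := by omega
        rw [e2] at hmi
        linarith
      intro i h1 h2
      rcases Nat.lt_or_ge i (m+1) with him | him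
      · -- old intervals
        have him' : i ≤ m := by omega
        have hsub : ∀ u ∈ uIcc (c i - h) (c i + h), Wmod ω (R σ u) = Wmod ω (ρ u) := by
          intro u hu
          rw [uIcc_of_le (by linarith)] at hu
          rw [hReq σ hσmem.1 u (le_trans hu.2 (cmono i h1 him'))]
        rw [intervalIntegral.integral_congr hsub]
        exact hmeans i h1 him'
      · have : i = m + 1 := by omega
        subst this
        show (∫ u in e..p, Wmod ω (R σ u)) = 2*h*γ
        exact hMσ
    · -- the invariant
      rw [if_neg (by omega)]
      show (∫ s in (0:ℝ)..(2*h), Wmod ω (R σ p - s)) ≤ 2*h*γ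
      have hval : R σ p = max (D₀ p) (p - σ) := rfl
      rcases max_cases (D₀ p) (p - σ) with ⟨hvv, hge⟩ | ⟨hvv, hlt⟩
      · -- descending case : R σ p ≤ r
        have hle : R σ p ≤ r := by
          rw [hval, hvv]
          calc D₀ p ≤ max (r + (P - p)) 0 := hD₀le p
            _ ≤ max r 0 := max_le_max (by linarith) (le_refl 0)
            _ = r := max_eq_left hrnn
        calc (∫ s in (0:ℝ)..(2*h), Wmod ω (R σ p - s))
            ≤ ∫ s in (0:ℝ)..(2*h), Wmod ω (r - s) := by
              apply intervalIntegral.integral_mono_on (by linarith)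
                (intble_W_comp hω (continuous_const.sub continuous_id) _ _)
                (intble_W_comp hω (continuous_const.sub continuous_id) _ _)
              intro s _
              exact Wmod.mono hω (show R σ p - s ≤ r - s by linarith)
          _ ≤ 2*h*γ := hINV
      · -- rising case : R σ p = p - σ
        have hr0 : 0 ≤ p - σ := by linarith [hσmem.2]
        have hr2 : p - σ ≤ 2*h := by have := hσmem.1; rw [hpe2]; linarith
        rw [hval, hvv]
        rw [int_W_window hω (p - σ) (2*h)]
        have split : (∫ s in (p-σ-2*h)..(p-σ), Wmod ω s)
            = (∫ s in (p-σ-2*h)..(0:ℝ), Wmod ω s) + ∫ s in (0:ℝ)..(p-σ), Wmod ω s := by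
          rw [intervalIntegral.integral_add_adjacent_intervals
            ((Wmod.cont hω).intervalIntegrable _ _) ((Wmod.cont hω).intervalIntegrable _ _)]
        have first0 : (∫ s in (p-σ-2*h)..(0:ℝ), Wmod ω s) = 0 := by
          have : ∀ s ∈ uIcc (p-σ-2*h) (0:ℝ), Wmod ω s = 0 := by
            intro s hs
            rw [uIcc_of_le (by linarith)] at hs
            exact Wmod.nonpos_val hω hs.2
          rw [intervalIntegral.integral_congr this, intervalIntegral.integral_zero]
        have second : (∫ s in (0:ℝ)..(p-σ), Wmod ω s) ≤ M σ := by
          have e1 : (∫ s in (0:ℝ)..(p-σ), Wmod ω s) = ∫ u in σ..p, Wmod ω (u - σ) := by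
            rw [intervalIntegral.integral_comp_sub_right (Wmod ω) σ]
            norm_num
          have e2 : (∫ u in σ..p, Wmod ω (u - σ)) ≤ ∫ u in σ..p, Wmod ω (R σ u) := by
            apply intervalIntegral.integral_mono_on (by linarith)
              (intble_W_comp hω (continuous_id.sub continuous_const) _ _)
              (intble_W_comp hω (hRcont σ) _ _)
            intro u _
            exact Wmod.mono hω (le_max_right _ _)
          have e3 : (∫ u in σ..p, Wmod ω (R σ u)) ≤ M σ := by
            show (∫ u in σ..p, Wmod ω (R σ u)) ≤ ∫ u in e..p, Wmod ω (R σ u)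
            have hsplit : (∫ u in e..p, Wmod ω (R σ u))
                = (∫ u in e..σ, Wmod ω (R σ u)) + ∫ u in σ..p, Wmod ω (R σ u) := by
              rw [intervalIntegral.integral_add_adjacent_intervals
                (intble_W_comp hω (hRcont σ) _ _) (intble_W_comp hω (hRcont σ) _ _)]
            have hpos : 0 ≤ ∫ u in e..σ, Wmod ω (R σ u) := by
              apply intervalIntegral.integral_nonneg hσmem.1
              intro u _; exact Wmod.nonneg hω _
            rw [hsplit]; linarith
          linarith
        rw [split, first0]
        rw [hMσ] at second
        linarith
    · rw [if_neg (by omega)]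
      linarith

section Extremal

variable {ω : ℝ → ℝ} {a b h δ : ℝ} {n : ℕ} {t : ℕ → ℝ}

lemma adm_lt (hadm : AdmKnots a b h n t) (hh : 0 < h) :
    ∀ i j, 1 ≤ i → i < j → j ≤ n → t i + h < t j - h := by
  intro i j hi hij hjn
  induction j with
  | zero => omega
  | succ j IH =>
    rcases Nat.lt_or_ge i j with hij' | hij'
    · have h1 := IH (by omega) (by omega)
      have h2 := hadm.2.1 j (by omega) (by omega)
      linarith
    · have : i = j := by omega
      subst this
      exact hadm.2.1 i hi (by omega)

lemma adm_le (hadm : AdmKnots a b h n t) (hh : 0 < h) :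
    ∀ i j, 1 ≤ i → i ≤ j → j ≤ n → t i ≤ t j := by
  intro i j hi hij hjn
  rcases Nat.lt_or_ge i j with hij' | hij'
  · have := adm_lt hadm hh i j hi hij' hjn
    linarith
  · have : i = j := by omega
    subst this; exact le_refl _

/-- Gap selection: some gap has radius `≥ δ`. -/
lemma gap_select (hadm : AdmKnots a b h n t) (hh : 0 < h) (hn : 0 < n) (hδ : 2*(n:ℝ)*δ = b - a) :
    ∃ k ≤ n, δ ≤ (if k = 0 then t 1 - a else if k = n then b - t n else (t (k+1) - t k)/2) := by
  by_contra hcon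
  push_neg at hcon
  have h0 := hcon 0 (by omega)
  rw [if_pos rfl] at h0
  have hnn := hcon n (le_refl n)
  rw [if_neg (by omega), if_pos rfl] at hnn
  have hmid : ∀ i, 1 ≤ i → i ≤ n - 1 → t (i+1) - t i < 2*δ := by
    intro i h1 h2
    have := hcon i (by omega)
    rw [if_neg (by omega), if_neg (by omega)] at this
    linarith
  have htel : (∑ j ∈ Finset.range (n-1), (t (j+1+1) - t (j+1))) = t n - t 1 := by
    have := Finset.sum_range_sub (f := fun j => t (j+1)) (n-1)
    rw [this]
    congr 2
    omega
  have hsum : t n - t 1 ≤ ((n:ℝ) - 1) * (2*δ) := by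
    rw [← htel]
    calc (∑ j ∈ Finset.range (n-1), (t (j+1+1) - t (j+1)))
        ≤ ∑ j ∈ Finset.range (n-1), (2*δ) := by
          apply Finset.sum_le_sum
          intro j hj
          rw [Finset.mem_range] at hj
          exact le_of_lt (hmid (j+1) (by omega) (by omega))
      _ = ((n:ℝ)-1) * (2*δ) := by
          rw [Finset.sum_const, Finset.card_range, nsmul_eq_mul]
          have : ((n - 1 : ℕ) : ℝ) = (n:ℝ) - 1 := by
            have : (1:ℕ) ≤ n := hn
            push_cast [Nat.cast_sub this]
            ring
          rw [this]
  have : b - a < 2*(n:ℝ)*δ := by nlinarith [h0, hnn, hsum]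
  linarith [hδ ▸ this]

end Extremal

set_option maxHeartbeats 1000000 in
/-- Existence of the extremal function: in `H^ω`, zero mean on every interval, and with a
point value at least `(1/2h)∫_{δ-h}^{δ+h} ω`. -/
lemma extremal_exists (hω : IsModulus ω) (hadm : AdmKnots a b h n t) (hh : 0 < h)
    (hn : 0 < n) (hδh : h < δ) (hδeq : 2*(n:ℝ)*δ = b - a) :
    ∃ F : ℝ → ℝ, ∃ u₀ ∈ Icc a b, HWOn ω (Icc a b) F ∧
      (∀ i, 1 ≤ i → i ≤ n → (∫ u in (t i - h)..(t i + h), F u) = 0) ∧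
      (∫ s in (δ-h)..(δ+h), ω s) ≤ 2*h*(F u₀) := by
  have h2h : (0:ℝ) < 2*h := by linarith
  have hδ0 : 0 < δ := by linarith
  have hnR : (0:ℝ) < (n:ℝ) := by exact_mod_cast hn
  have hab : a < b := by nlinarith [hδeq]
  obtain ⟨k, hkn, hkD⟩ := gap_select hadm hh hn hδeq
  set D : ℝ := (if k = 0 then t 1 - a else if k = n then b - t n else (t (k+1) - t k)/2)
    with hDdef
  have hDδ : δ ≤ D := hkD
  have hDh : h < D := lt_of_lt_of_le hδh hDδ
  set μ : ℝ := (if k = 0 then a else if k = n then b else (t k + t (k+1))/2) with hμdef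
  set q : ℝ := (if k = 0 then a else t k - h) with hqdef
  set p₀ : ℝ := (if k = n then b else t (k+1) + h) with hp₀def
  have hμL : 1 ≤ k → μ = t k + D := by
    intro hk1
    have hk0 : ¬(k = 0) := by omega
    by_cases hkn' : k = n
    · simp only [hμdef, hDdef, if_neg hk0, if_pos hkn']
      rw [hkn']; ring
    · simp only [hμdef, hDdef, if_neg hk0, if_neg hkn']; ring
  have hμR : k + 1 ≤ n → μ = t (k+1) - D := by
    intro hk1
    have hkn' : ¬(k = n) := by omega
    by_cases hk0 : k = 0
    · subst hk0
      simp only [hμdef, hDdef, if_pos rfl]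
      norm_num
    · simp only [hμdef, hDdef, if_neg hk0, if_neg hkn']; ring
  have hqa : a ≤ q := by
    by_cases hk0 : k = 0
    · rw [hqdef, if_pos hk0]
    · rw [hqdef, if_neg hk0]
      have := adm_le hadm hh 1 k (le_refl 1) (by omega) hkn
      have h2 := hadm.1
      linarith
  have hp₀b : p₀ ≤ b := by
    by_cases hkn' : k = n
    · rw [hp₀def, if_pos hkn']
    · rw [hp₀def, if_neg hkn']
      have := adm_le hadm hh (k+1) n (by omega) (by omega) (le_refl n)
      have h2 := hadm.2.2
      linarith
  have hqeq : 1 ≤ k → q = μ - (D+h) := by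
    intro hk1
    rw [hqdef, if_neg (by omega), hμL hk1]; ring
  have hp₀eq : k + 1 ≤ n → p₀ = μ + (D+h) := by
    intro hk1
    rw [hp₀def, if_neg (by omega), hμR hk1]; ring
  have hqμ : μ - (D+h) ≤ q := by
    by_cases hk0 : k = 0
    · subst hk0
      rw [hqdef, if_pos rfl, hμdef, if_pos rfl]; linarith
    · rw [hqeq (by omega)]
  have hp₀μ : p₀ ≤ μ + (D+h) := by
    by_cases hkn' : k = n
    · subst hkn'
      rw [hp₀def, if_pos rfl, hμdef, if_neg (by omega), if_pos rfl]; linarith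
    · rw [hp₀eq (by omega)]
  have hqμ2 : q ≤ μ := by
    by_cases hk0 : k = 0
    · subst hk0
      rw [hqdef, if_pos rfl, hμdef, if_pos rfl]
    · rw [hqeq (by omega)]; linarith
  have hμp₀ : μ ≤ p₀ := by
    by_cases hkn' : k = n
    · subst hkn'
      rw [hp₀def, if_pos rfl, hμdef, if_neg (by omega), if_pos rfl]
    · rw [hp₀eq (by omega)]; linarith
  have hqp : q ≤ p₀ := le_trans hqμ2 hμp₀
  have hμab : μ ∈ Icc a b := ⟨le_trans hqa hqμ2, le_trans hμp₀ hp₀b⟩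
  -- the constants
  set Cp : ℝ := (∫ s in (D-h)..(D+h), Wmod ω s) / (2*h) with hCpdef
  set γ : ℝ := Wmod ω (D+h) - Cp with hγdef
  have hCp2h : 2*h*Cp = ∫ s in (D-h)..(D+h), Wmod ω s := by
    rw [hCpdef]; field_simp
  have hγ0 : 0 ≤ γ := by
    have hle : (∫ s in (D-h)..(D+h), Wmod ω s) ≤ ∫ s in (D-h)..(D+h), Wmod ω (D+h) := by
      apply intervalIntegral.integral_mono_on (by linarith)
        ((Wmod.cont hω).intervalIntegrable _ _) intervalIntegrable_const
      intro s hs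
      exact Wmod.mono hω hs.2
    rw [intervalIntegral.integral_const] at hle
    have e : (D+h-(D-h)) • Wmod ω (D+h) = 2*h*Wmod ω (D+h) := by
      rw [smul_eq_mul]; ring_nf
    rw [e] at hle
    rw [hγdef]
    rw [← hCp2h] at hle
    nlinarith
  have hγA : 2*h*γ ≤ ∫ s in (0:ℝ)..(2*h), Wmod ω s := by
    have i1 : IntervalIntegrable (fun s : ℝ => Wmod ω (D+h-s)) volume 0 (2*h) :=
      intble_W_comp hω (continuous_const.sub continuous_id) _ _
    have i2 : IntervalIntegrable (fun s : ℝ => Wmod ω s) volume 0 (2*h) :=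
      (Wmod.cont hω).intervalIntegrable _ _
    have hsum : (∫ s in (0:ℝ)..(2*h), Wmod ω (D+h))
        ≤ ∫ s in (0:ℝ)..(2*h), (Wmod ω (D+h-s) + Wmod ω s) := by
      apply intervalIntegral.integral_mono_on (by linarith) intervalIntegrable_const (i1.add i2)
      intro s _
      have hp := Wmod.subadd hω (D+h-s) s
      have e : D+h-s+s = D+h := by ring
      rw [e] at hp
      exact hp
    have hadd : (∫ s in (0:ℝ)..(2*h), (Wmod ω (D+h-s) + Wmod ω s))
        = (∫ s in (0:ℝ)..(2*h), Wmod ω (D+h-s)) + ∫ s in (0:ℝ)..(2*h), Wmod ω s :=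
      intervalIntegral.integral_add i1 i2
    have hint1 : (∫ s in (0:ℝ)..(2*h), Wmod ω (D+h-s)) = ∫ s in (D-h)..(D+h), Wmod ω s := by
      have hw := int_W_window hω (D+h) (2*h)
      have e : D+h-2*h = D-h := by ring
      rw [e] at hw
      exact hw
    rw [hadd, hint1, intervalIntegral.integral_const] at hsum
    have e2 : (2*h - 0) • Wmod ω (D+h) = 2*h*Wmod ω (D+h) := by
      rw [smul_eq_mul]; ring_nf
    rw [e2] at hsum
    rw [hγdef]
    rw [← hCp2h] at hsum
    linarith
  -- the right chain
  set mR : ℕ := n - (k+1) with hmRdef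
  set cR : ℕ → ℝ := fun j => t (k+1+j) with hcRdef
  have hspR : ∀ i, 1 ≤ i → i ≤ mR → (if i = 1 then p₀ else cR (i-1) + h) < cR i - h := by
    intro i h1 h2
    rw [hmRdef] at h2
    have hkn' : k + 1 < n := by omega
    by_cases hi1 : i = 1
    · subst hi1
      rw [if_pos rfl, hp₀def, if_neg (by omega)]
      simp only [hcRdef]
      exact hadm.2.1 (k+1) (by omega) hkn'
    · rw [if_neg hi1]
      simp only [hcRdef]
      have hlt := hadm.2.1 (k+i) (by omega) (by omega)
      have e1 : k + 1 + (i-1) = k + i := by omega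
      have e2 : k + 1 + i = k + i + 1 := by omega
      rw [e1, e2]
      exact hlt
  obtain ⟨ρR, hRlip, hRnn, hRfr, hRmeans, _, _⟩ :=
    chain_exists hω hh hγ0 hγA cR mR p₀ hspR
  -- the left chain
  set mL : ℕ := k - 1 with hmLdef
  set cL : ℕ → ℝ := fun j => -t (k-j) with hcLdef
  have hspL : ∀ i, 1 ≤ i → i ≤ mL → (if i = 1 then -q else cL (i-1) + h) < cL i - h := by
    intro i h1 h2
    rw [hmLdef] at h2
    have hk2 : 2 ≤ k := by omega
    by_cases hi1 : i = 1
    · subst hi1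
      rw [if_pos rfl, hqdef, if_neg (by omega)]
      simp only [hcLdef]
      have hlt := hadm.2.1 (k-1) (by omega) (by omega)
      have e : k - 1 + 1 = k := by omega
      rw [e] at hlt
      have e2 : k - 1 = k - 1 := rfl
      linarith
    · rw [if_neg hi1]
      simp only [hcLdef]
      have hlt := hadm.2.1 (k-i) (by omega) (by omega)
      have e1 : k - (i-1) = k - i + 1 := by omega
      rw [e1]
      linarith
  obtain ⟨ρL, hLlip, hLnn, hLfr, hLmeans, _, _⟩ :=
    chain_exists hω hh hγ0 hγA cL mL (-q) hspL
  -- the extremal function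
  set F : ℝ → ℝ := fun u =>
    if u < q then -γ + Wmod ω (ρL (-u))
    else if u ≤ p₀ then Cp - Wmod ω |u - μ| else -γ + Wmod ω (ρR u) with hFdef
  -- values of F on the pieces
  have hFcore : ∀ u, q ≤ u → u ≤ p₀ → F u = Cp - Wmod ω |u - μ| := by
    intro u h1 h2
    rw [hFdef]
    simp only [not_lt.2 h1, if_false, if_pos h2]
  have hFq : 1 ≤ k → F q = -γ := by
    intro hk1
    rw [hFcore q (le_refl q) hqp, hqeq hk1]
    have e : |μ - (D+h) - μ| = D + h := by
      rw [show μ - (D+h) - μ = -(D+h) by ring, abs_neg, abs_of_nonneg (by linarith)]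
    rw [e, hγdef]; ring
  have hFp₀ : k + 1 ≤ n → F p₀ = -γ := by
    intro hk1
    rw [hFcore p₀ hqp (le_refl p₀), hp₀eq hk1]
    have e : |μ + (D+h) - μ| = D + h := by
      rw [show μ + (D+h) - μ = D+h by ring, abs_of_nonneg (by linarith)]
    rw [e, hγdef]; ring
  have hFleft : 1 ≤ k → ∀ u, u ≤ q → F u = -γ + Wmod ω (ρL (-u)) := by
    intro hk1 u hu
    rcases lt_or_eq_of_le hu with hu' | hu'
    · rw [hFdef]; simp only [if_pos hu']
    · subst hu'
      rw [hFq hk1, hLfr (-q) (le_refl _), Wmod.zeroval hω]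
      ring
  have hFright : k + 1 ≤ n → ∀ u, p₀ ≤ u → F u = -γ + Wmod ω (ρR u) := by
    intro hk1 u hu
    rcases lt_or_eq_of_le hu with hu' | hu'
    · rw [hFdef]
      simp only [not_lt.2 (le_trans hqp (le_of_lt hu')), if_false, not_le.2 hu', if_false]
    · subst hu'
      rw [hFp₀ hk1, hRfr p₀ (le_refl _), Wmod.zeroval hω]
      ring
  -- F is bounded below by -γ
  have hFmin : ∀ y, -γ ≤ F y := by
    intro y
    simp only [hFdef]
    by_cases h1 : y < q
    · rw [if_pos h1]
      have := Wmod.nonneg hω (ρL (-y))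
      linarith
    · rw [if_neg h1]
      by_cases h2 : y ≤ p₀
      · rw [if_pos h2]
        have hb : |y - μ| ≤ D + h := by
          rw [abs_le]
          constructor
          · push_neg at h1; linarith
          · linarith
        have := Wmod.mono hω hb
        rw [hγdef]
        linarith
      · rw [if_neg h2]
        have := Wmod.nonneg hω (ρR y)
        linarith
  -- Hω property on the pieces
  have hHWcore : HWOn ω (Icc q p₀) F := by
    intro x hx y hy
    rw [hFcore x hx.1 hx.2, hFcore y hy.1 hy.2]
    have e : Cp - Wmod ω |x - μ| - (Cp - Wmod ω |y - μ|) = Wmod ω |y - μ| - Wmod ω |x - μ| := by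
      ring
    rw [e]
    refine le_trans (Wmod.lip hω _ _) (Wmod.mono hω ?_)
    have h1 := abs_abs_sub_abs_le_abs_sub (y - μ) (x - μ)
    have e2 : y - μ - (x - μ) = -(x - y) := by ring
    rw [e2, abs_neg] at h1
    exact h1
  have hHWleft : 1 ≤ k → HWOn ω (Icc a q) F := by
    intro hk1 x hx y hy
    rw [hFleft hk1 x hx.2, hFleft hk1 y hy.2]
    have e : -γ + Wmod ω (ρL (-x)) - (-γ + Wmod ω (ρL (-y)))
        = Wmod ω (ρL (-x)) - Wmod ω (ρL (-y)) := by ring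
    rw [e]
    refine le_trans (Wmod.lip hω _ _) (Wmod.mono hω ?_)
    have := hLlip.dist_le_mul (-x) (-y)
    rw [Real.dist_eq, Real.dist_eq, NNReal.coe_one, one_mul] at this
    calc |ρL (-x) - ρL (-y)| ≤ |(-x) - (-y)| := this
      _ = |x - y| := by rw [show (-x) - (-y) = -(x - y) by ring, abs_neg]
  have hHWright : k + 1 ≤ n → HWOn ω (Icc p₀ b) F := by
    intro hk1 x hx y hy
    rw [hFright hk1 x hx.1, hFright hk1 y hy.1]
    have e : -γ + Wmod ω (ρR x) - (-γ + Wmod ω (ρR y)) = Wmod ω (ρR x) - Wmod ω (ρR y) := by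
      ring
    rw [e]
    refine le_trans (Wmod.lip hω _ _) (Wmod.mono hω ?_)
    have := hRlip.dist_le_mul x y
    rw [Real.dist_eq, Real.dist_eq, NNReal.coe_one, one_mul] at this
    exact this
  -- glue
  have hHW1 : HWOn ω (Icc a p₀) F := by
    by_cases hk0 : k = 0
    · have : q = a := by rw [hqdef, if_pos hk0]
      rw [← this]
      exact hHWcore.mono_set (Icc_subset_Icc (le_refl q) (le_refl p₀))
    · apply glue_at_min hω hqa hqp (hHWleft (by omega)) hHWcore
      intro y _
      rw [hFq (by omega)]
      exact hFmin y
  have hHW : HWOn ω (Icc a b) F := by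
    by_cases hkn' : k = n
    · have : p₀ = b := by rw [hp₀def, if_pos hkn']
      rw [← this]
      exact hHW1
    · apply glue_at_min hω (le_trans hqa hqp) hp₀b hHW1 (hHWright (by omega))
      intro y _
      rw [hFp₀ (by omega)]
      exact hFmin y
  have contL : Continuous (fun u : ℝ => Wmod ω (ρL (-u))) :=
    (Wmod.cont hω).comp (hLlip.continuous.comp continuous_neg)
  have contR : Continuous (fun u : ℝ => Wmod ω (ρR u)) :=
    (Wmod.cont hω).comp hRlip.continuous
  refine ⟨F, μ, hμab, hHW, ?_, ?_⟩
  · intro i h1i hin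
    rcases Nat.lt_or_ge i k with hik | hik
    · -- left-chain intervals
      have hk2 : 2 ≤ k := by omega
      have hiq : t i + h < q := by
        rw [hqdef, if_neg (by omega)]
        exact adm_lt hadm hh i k h1i hik hkn
      have hcong : ∀ u ∈ uIcc (t i - h) (t i + h), F u = -γ + Wmod ω (ρL (-u)) := by
        intro u hu
        rw [uIcc_of_le (by linarith)] at hu
        exact hFleft (by omega) u (by linarith [hu.2])
      rw [intervalIntegral.integral_congr hcong]
      have hadd : (∫ u in (t i - h)..(t i + h), (-γ + Wmod ω (ρL (-u))))
          = (∫ _u in (t i - h)..(t i + h), (-γ : ℝ))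
            + ∫ u in (t i - h)..(t i + h), Wmod ω (ρL (-u)) :=
        intervalIntegral.integral_add intervalIntegrable_const (contL.intervalIntegrable _ _)
      rw [hadd, intervalIntegral.integral_const]
      have hrefl : (∫ u in (t i - h)..(t i + h), Wmod ω (ρL (-u)))
          = ∫ x in (-(t i + h))..(-(t i - h)), Wmod ω (ρL x) :=
        intervalIntegral.integral_comp_neg (fun x => Wmod ω (ρL x))
      have hLm := hLmeans (k - i) (by omega) (by omega)
      have e1 : cL (k - i) = -t i := by
        simp only [hcLdef]
        have e : k - (k - i) = i := by omega
        rw [e]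
      rw [e1] at hLm
      have e2 : -(t i + h) = -t i - h := by ring
      have e3 : -(t i - h) = -t i + h := by ring
      rw [hrefl, e2, e3, hLm, smul_eq_mul]
      ring
    · rcases Nat.eq_or_lt_of_le hik with hik' | hik2
      · -- i = k : left covered interval
        have hk1 : 1 ≤ k := by omega
        subst hik'
        have hμk : μ = t k + D := hμL hk1
        have hqtk : q = t k - h := by rw [hqdef, if_neg (by omega)]
        have htkp₀ : t k + h ≤ p₀ := by
          by_cases hkn' : k = n
          · rw [hp₀def, if_pos hkn']
            have h22 := hadm.2.2
            rw [← hkn'] at h22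
            exact h22
          · rw [hp₀def, if_neg hkn']
            have := hadm.2.1 k hk1 (by omega)
            linarith
        have hcong : ∀ u ∈ uIcc (t k - h) (t k + h), F u = Cp - Wmod ω (μ - u) := by
          intro u hu
          rw [uIcc_of_le (by linarith)] at hu
          rw [hFcore u (by rw [hqtk] at *; exact hu.1) (le_trans hu.2 htkp₀)]
          congr 1
          rw [abs_of_nonpos (by linarith [hu.2] : u - μ ≤ 0)]
          ring
        rw [intervalIntegral.integral_congr hcong]
        have hsub : (∫ u in (t k - h)..(t k + h), (Cp - Wmod ω (μ - u)))
            = (∫ _u in (t k - h)..(t k + h), Cp)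
              - ∫ u in (t k - h)..(t k + h), Wmod ω (μ - u) :=
          intervalIntegral.integral_sub intervalIntegrable_const
            (intble_W_comp hω (continuous_const.sub continuous_id) _ _)
        rw [hsub, intervalIntegral.integral_const]
        have hcs : (∫ u in (t k - h)..(t k + h), Wmod ω (μ - u))
            = ∫ s in (μ - (t k + h))..(μ - (t k - h)), Wmod ω s :=
          intervalIntegral.integral_comp_sub_left (Wmod ω) μ
        have e1 : μ - (t k + h) = D - h := by rw [hμk]; ring
        have e2 : μ - (t k - h) = D + h := by rw [hμk]; ring
        rw [hcs, e1, e2, ← hCp2h, smul_eq_mul]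
        ring
      · rcases Nat.eq_or_lt_of_le hik2 with hik3 | hik4
        · -- i = k + 1 : right covered interval
          have hkn1 : k + 1 ≤ n := by omega
          have hμk : μ = t (k+1) - D := hμR hkn1
          have hi : i = k + 1 := hik3.symm
          subst hi
          have hp₀k : p₀ = t (k+1) + h := by
            rw [hp₀eq hkn1, hμk]; ring
          have hcong : ∀ u ∈ uIcc (t (k+1) - h) (t (k+1) + h), F u = Cp - Wmod ω (u - μ) := by
            intro u hu
            rw [uIcc_of_le (by linarith)] at hu
            have hu1 : q ≤ u := by
              have : μ ≤ u := by rw [hμk]; linarith [hu.1]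
              linarith [hqμ2]
            rw [hFcore u hu1 (by rw [hp₀k]; exact hu.2)]
            congr 1
            rw [abs_of_nonneg (by rw [hμk]; linarith [hu.1] : 0 ≤ u - μ)]
          rw [intervalIntegral.integral_congr hcong]
          have hsub : (∫ u in (t (k+1) - h)..(t (k+1) + h), (Cp - Wmod ω (u - μ)))
              = (∫ _u in (t (k+1) - h)..(t (k+1) + h), Cp)
                - ∫ u in (t (k+1) - h)..(t (k+1) + h), Wmod ω (u - μ) :=
            intervalIntegral.integral_sub intervalIntegrable_const
              (intble_W_comp hω (continuous_id.sub continuous_const) _ _)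
          rw [hsub, intervalIntegral.integral_const]
          have hcs : (∫ u in (t (k+1) - h)..(t (k+1) + h), Wmod ω (u - μ))
              = ∫ s in (t (k+1) - h - μ)..(t (k+1) + h - μ), Wmod ω s :=
            intervalIntegral.integral_comp_sub_right (Wmod ω) μ
          have e1 : t (k+1) - h - μ = D - h := by rw [hμk]; ring
          have e2 : t (k+1) + h - μ = D + h := by rw [hμk]; ring
          rw [hcs, e1, e2, ← hCp2h, smul_eq_mul]
          ring
        · -- right-chain intervals
          have hkn1 : k + 1 ≤ n := by omega
          have hp₀u : p₀ < t i - h := by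
            rw [hp₀def, if_neg (by omega)]
            exact adm_lt hadm hh (k+1) i (by omega) (by omega) hin
          have hcong : ∀ u ∈ uIcc (t i - h) (t i + h), F u = -γ + Wmod ω (ρR u) := by
            intro u hu
            rw [uIcc_of_le (by linarith)] at hu
            exact hFright hkn1 u (by linarith [hu.1])
          rw [intervalIntegral.integral_congr hcong]
          have hadd : (∫ u in (t i - h)..(t i + h), (-γ + Wmod ω (ρR u)))
              = (∫ _u in (t i - h)..(t i + h), (-γ : ℝ))
                + ∫ u in (t i - h)..(t i + h), Wmod ω (ρR u) :=
            intervalIntegral.integral_add intervalIntegrable_const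
              (contR.intervalIntegrable _ _)
          rw [hadd, intervalIntegral.integral_const]
          have hRm := hRmeans (i - (k+1)) (by omega) (by omega)
          have e1 : cR (i - (k+1)) = t i := by
            simp only [hcRdef]
            have e : k + 1 + (i - (k+1)) = i := by omega
            rw [e]
          rw [e1] at hRm
          rw [hRm, smul_eq_mul]
          ring
  · -- the value at μ
    have hFμ : F μ = Cp := by
      rw [hFcore μ hqμ2 hμp₀]
      have : |μ - μ| = 0 := by simp
      rw [this, Wmod.zeroval hω]
      ring
    rw [hFμ, hCp2h]
    have hcong : ∀ s ∈ uIcc (δ-h) (δ+h), ω s = Wmod ω s := by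
      intro s hs
      rw [uIcc_of_le (by linarith)] at hs
      exact (Wmod.eq_of_nonneg (by linarith [hs.1])).symm
    rw [intervalIntegral.integral_congr hcong]
    have hfin := int_shift_le hω (A := D - h) (B := D + h) (τ := D - δ) (by linarith) (by linarith)
    have e1 : D - h - (D - δ) = δ - h := by ring
    have e2 : D + h - (D - δ) = δ + h := by ring
    rw [e1, e2] at hfin
    exact hfin

section UB
variable {ω : ℝ → ℝ} {a b h δ : ℝ} {n : ℕ}

/-- An `H^ω` function is continuous on `[a,b]`. -/
lemma holder_continuousOn {E : Type*} [NormedAddCommGroup E] {f : ℝ → E}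
    (hω : IsModulus ω)
    (hf : ∀ s ∈ Icc a b, ∀ t ∈ Icc a b, ‖f t - f s‖ ≤ ω |t - s|) :
    ContinuousOn f (Icc a b) := by
  intro x hx
  rw [Metric.continuousWithinAt_iff]
  intro ε hε
  have hWc : ContinuousAt (Wmod ω) 0 := (Wmod.cont hω).continuousAt
  rw [Metric.continuousAt_iff] at hWc
  obtain ⟨d, hd, hball⟩ := hWc ε hε
  refine ⟨d, hd, fun {y} hy hyd => ?_⟩
  have h1 : ‖f y - f x‖ ≤ ω |y - x| := hf x hx y hy
  have h2 : Wmod ω (|y - x|) < ε := by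
    have h3 := hball (x := |y - x|) (by rwa [Real.dist_eq, sub_zero, abs_abs, ← Real.dist_eq])
    rw [Real.dist_eq, Wmod.zeroval hω, sub_zero] at h3
    exact lt_of_le_of_lt (le_abs_self _) h3
  rw [dist_eq_norm]
  calc ‖f y - f x‖ ≤ ω (|y - x|) := h1
    _ = Wmod ω (|y - x|) := (Wmod.eq_of_nonneg (abs_nonneg _)).symm
    _ < ε := h2

/-- Key upper-bound comparison for a window at distance `≤ δ`. -/
lemma key_ub (hω : IsModulus ω) (hh : 0 < h) (hδh : h < δ) {T u : ℝ} (hTu : |u - T| ≤ δ) :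
    (∫ v in (T-h)..(T+h), Wmod ω (|v - u|)) ≤ ∫ s in (δ-h)..(δ+h), Wmod ω s := by
  have habs : Continuous (fun s : ℝ => Wmod ω |s|) := (Wmod.cont hω).comp continuous_abs
  -- reduce to the window ∫_{d-h}^{d+h} W|s| with d := T - u
  have e0 : (∫ v in (T-h)..(T+h), Wmod ω (|v - u|)) = ∫ s in (T-u-h)..(T-u+h), Wmod ω |s| := by
    have := intervalIntegral.integral_comp_sub_right (fun s => Wmod ω |s|) u
      (a := T - h) (b := T + h)
    rw [this]
    congr 1 <;> ring
  rw [e0]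
  -- main claim for 0 ≤ d ≤ δ
  have claim : ∀ d, 0 ≤ d → d ≤ δ →
      (∫ s in (d-h)..(d+h), Wmod ω |s|) ≤ ∫ s in (δ-h)..(δ+h), Wmod ω s := by
    intro d hd0 hdδ
    have h1 : (∫ s in (d-h)..(d+h), Wmod ω |s|)
        = (∫ s in (d-h)..(δ+h), Wmod ω |s|) - ∫ s in (d+h)..(δ+h), Wmod ω |s| := by
      rw [← intervalIntegral.integral_add_adjacent_intervals
        (habs.intervalIntegrable (d-h) (d+h)) (habs.intervalIntegrable (d+h) (δ+h))]
      ring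
    have h2 : (∫ s in (δ-h)..(δ+h), Wmod ω |s|)
        = (∫ s in (d-h)..(δ+h), Wmod ω |s|) - ∫ s in (d-h)..(δ-h), Wmod ω |s| := by
      rw [← intervalIntegral.integral_add_adjacent_intervals
        (habs.intervalIntegrable (d-h) (δ-h)) (habs.intervalIntegrable (δ-h) (δ+h))]
      ring
    have h3 : (∫ s in (d-h)..(δ-h), Wmod ω |s|) ≤ ∫ s in (d+h)..(δ+h), Wmod ω |s| := by
      have e1 : (∫ s in (d-h)..(δ-h), Wmod ω |s|) = ∫ s in (d+h)..(δ+h), Wmod ω |s - 2*h| := by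
        have := intervalIntegral.integral_comp_sub_right (fun s => Wmod ω |s|) (2*h)
          (a := d + h) (b := δ + h)
        rw [this]
        congr 1 <;> ring
      rw [e1]
      apply intervalIntegral.integral_mono_on (by linarith)
        ((habs.comp (continuous_id.sub continuous_const)).intervalIntegrable _ _)
        (habs.intervalIntegrable _ _)
      intro s hs
      apply Wmod.mono hω
      have hs0 : h ≤ s := by linarith [hs.1]
      have h5 : |s - 2*h| ≤ s := abs_le.2 ⟨by linarith, by linarith⟩
      rw [abs_of_nonneg (by linarith : (0:ℝ) ≤ s)]
      exact h5
    have h4 : (∫ s in (δ-h)..(δ+h), Wmod ω |s|) = ∫ s in (δ-h)..(δ+h), Wmod ω s := by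
      apply intervalIntegral.integral_congr
      intro s hs
      rw [uIcc_of_le (by linarith)] at hs
      show Wmod ω |s| = Wmod ω s
      rw [abs_of_nonneg (by linarith [hs.1])]
    rw [← h4]
    linarith
  rcases le_total 0 (T - u) with hd | hd
  · exact claim (T - u) hd (by rw [abs_sub_comm] at hTu; exact le_trans (le_abs_self _) hTu)
  · have hcomp := intervalIntegral.integral_comp_neg (fun s => Wmod ω |s|)
      (a := u - T - h) (b := u - T + h)
    have e2 : -(u - T + h) = T - u - h := by ring
    have e3 : -(u - T - h) = T - u + h := by ring
    rw [e2, e3] at hcomp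
    have hev : (∫ s in (T-u-h)..(T-u+h), Wmod ω |s|) = ∫ s in (u-T-h)..(u-T+h), Wmod ω |s| := by
      rw [← hcomp]
      apply intervalIntegral.integral_congr
      intro s _
      simp [abs_neg]
    rw [hev]
    exact claim (u - T) (by linarith) (le_trans (le_abs_self _) hTu)

end UB

set_option maxHeartbeats 1000000 in
/-- Optimal recovery of the identity operator on `H^ω([a,b],E)` from mean values of the function
over `n` intervals of length `2h`: the optimal error equals
`(1/(2h)) ∫_{(b−a)/(2n)−h}^{(b−a)/(2n)+h} ω(u) du`; it is attained at the uniform knots with the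
piecewise-constant method `stepMethod`. -/
theorem optimal_recovery_identity_mean_values
    {E : Type*} [NormedAddCommGroup E] [NormedSpace ℝ E] [CompleteSpace E] [Nontrivial E]
    (ω : ℝ → ℝ) (hω : IsModulus ω)
    (a b : ℝ) (hab : a < b) (n : ℕ) (hn : 0 < n) (h : ℝ) (hh : 0 < h)
    (hnh : 2 * (n : ℝ) * h < b - a) :
    (AdmKnots a b h n (uniformKnots a b n) ∧
      ∀ f : ℝ → E, HHolder ω a b f → ∀ u ∈ Set.Icc a b,
        ‖f u - stepMethod a b n (meanInfo h n (uniformKnots a b n) f) u‖ ≤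
          (1 / (2 * h)) *
            ∫ s in ((b - a) / (2 * (n : ℝ)) - h)..((b - a) / (2 * (n : ℝ)) + h), ω s) ∧
    ∀ t : ℕ → ℝ, AdmKnots a b h n t → ∀ Φ : (Fin n → E) → ℝ → E, ∀ c : ℝ,
      (∀ f : ℝ → E, HHolder ω a b f → ∀ u ∈ Set.Icc a b,
        ‖f u - Φ (meanInfo h n t f) u‖ ≤ c) →
      (1 / (2 * h)) *
          ∫ s in ((b - a) / (2 * (n : ℝ)) - h)..((b - a) / (2 * (n : ℝ)) + h), ω s ≤ c := by
  have hnR : (0:ℝ) < (n:ℝ) := by exact_mod_cast hn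
  set δ : ℝ := (b - a) / (2 * (n:ℝ)) with hδdef
  have hδeq : 2*(n:ℝ)*δ = b - a := by
    rw [hδdef]; field_simp
  have hδh : h < δ := by
    rw [hδdef, lt_div_iff₀ (by positivity)]
    nlinarith
  have h2h : (0:ℝ) < 2*h := by linarith
  have hδ0 : 0 < δ := lt_trans hh hδh
  have huk : ∀ k : ℕ, uniformKnots a b n k = a + (2*(k:ℝ)-1)*δ := by
    intro k
    rw [uniformKnots, hδdef]
    ring
  refine ⟨⟨⟨?_, ?_, ?_⟩, ?_⟩, ?_⟩
  · rw [huk 1]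
    norm_num
    linarith
  · intro i h1 h2
    rw [huk i, huk (i+1)]
    push_cast
    have e : (2*((i:ℝ)+1)-1)*δ - (2*(i:ℝ)-1)*δ = 2*δ := by ring
    linarith
  · rw [huk n]
    have e : (2*(n:ℝ)-1)*δ = 2*(n:ℝ)*δ - δ := by ring
    linarith [hδeq]
  · -- upper bound
    intro f hf u hu
    simp only [stepMethod, dif_pos hn, meanInfo]
    set x : ℝ := (u - a) * n / (b - a) with hxdef
    set i : ℕ := min (n-1) ⌊x⌋₊ with hidef
    set T : ℝ := uniformKnots a b n (i+1) with hTdef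
    have hTval : T = a + (2*(i:ℝ)+1)*δ := by
      rw [hTdef, huk (i+1)]
      push_cast
      ring
    have hx0 : 0 ≤ x := by
      rw [hxdef]
      apply div_nonneg (mul_nonneg (by linarith [hu.1]) (by positivity)) (by linarith)
    have hba : b - a ≠ 0 := by linarith
    have hnne : (n:ℝ) ≠ 0 := ne_of_gt hnR
    have hxval : u - a = x * (2*δ) := by
      rw [hxdef, hδdef]
      field_simp
    have hxn : x ≤ (n:ℝ) := by
      rw [hxdef, div_le_iff₀ (by linarith)]
      nlinarith [hu.2]
    have hin : (i:ℝ) ≤ x ∧ x ≤ (i:ℝ) + 1 := by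
      by_cases hc : ⌊x⌋₊ ≤ n - 1
      · have hieq : i = ⌊x⌋₊ := min_eq_right hc
        constructor
        · rw [hieq]; exact Nat.floor_le hx0
        · rw [hieq]
          exact le_of_lt (Nat.lt_floor_add_one x)
      · have hieq : i = n - 1 := min_eq_left (by omega)
        have hxge : (n:ℝ) ≤ x := by
          have h1 : n ≤ ⌊x⌋₊ := by omega
          exact (Nat.le_floor_iff hx0).1 h1
        have hxeq : x = n := le_antisymm hxn hxge
        have e : ((i:ℝ)) = (n:ℝ) - 1 := by
          rw [hieq]
          push_cast [Nat.cast_sub hn]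
          ring
        constructor
        · rw [e, hxeq]; linarith
        · rw [e, hxeq]; linarith
    have hin2 : (i:ℝ) ≤ (n:ℝ) - 1 := by
      have : i ≤ n - 1 := min_le_left _ _
      have := (Nat.cast_le (α := ℝ)).2 this
      have e : ((n-1:ℕ):ℝ) = (n:ℝ) - 1 := by push_cast [Nat.cast_sub hn]; ring
      linarith [e ▸ this]
    have hTu : |u - T| ≤ δ := by
      rw [hTval, abs_le]
      constructor
      · nlinarith [hin.2, hxval]
      · nlinarith [hin.1, hxval]
    have hThb : T - h ≥ a ∧ T + h ≤ b := by
      constructor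
      · rw [hTval]; nlinarith [hδ0]
      · rw [hTval]
        have : 2*(i:ℝ)+1 ≤ 2*(n:ℝ)-1 := by linarith
        nlinarith [hδ0, hδeq]
    have hsub : Icc (T-h) (T+h) ⊆ Icc a b :=
      Icc_subset_Icc (by linarith [hThb.1]) (by linarith [hThb.2])
    have hcont : ContinuousOn f (Icc a b) := holder_continuousOn hω hf
    have hcont' : ContinuousOn f (uIcc (T-h) (T+h)) := by
      rw [uIcc_of_le (by linarith)]
      exact hcont.mono hsub
    have hfint : IntervalIntegrable f volume (T-h) (T+h) := hcont'.intervalIntegrable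
    have key : f u - (1/(2*h)) • (∫ v in T-h..T+h, f v)
        = (1/(2*h)) • ∫ v in T-h..T+h, (f u - f v) := by
      rw [intervalIntegral.integral_sub intervalIntegrable_const hfint,
        intervalIntegral.integral_const]
      have e2 : T + h - (T - h) = 2*h := by ring
      rw [e2, smul_sub, smul_smul]
      have e3 : 1/(2*h) * (2*h) = 1 := by field_simp
      rw [e3, one_smul]
    show ‖f u - (1/(2*h)) • (∫ v in T-h..T+h, f v)‖ ≤ (1/(2*h)) * ∫ s in (δ-h)..(δ+h), ω s
    rw [key, norm_smul]
    have hns : ‖(1/(2*h))‖ = 1/(2*h) := by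
      rw [Real.norm_eq_abs, abs_of_pos (by positivity)]
    rw [hns]
    apply mul_le_mul_of_nonneg_left _ (by positivity)
    have ibnd : IntervalIntegrable (fun v => ‖f u - f v‖) volume (T-h) (T+h) :=
      ((continuousOn_const.sub hcont').norm).intervalIntegrable
    have iW : IntervalIntegrable (fun v => Wmod ω (|v - u|)) volume (T-h) (T+h) :=
      (((Wmod.cont hω).comp (continuous_abs.comp (continuous_id.sub continuous_const)))).intervalIntegrable _ _
    calc ‖∫ v in T-h..T+h, (f u - f v)‖ ≤ ∫ v in T-h..T+h, ‖f u - f v‖ :=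
          intervalIntegral.norm_integral_le_integral_norm (by linarith)
      _ ≤ ∫ v in T-h..T+h, Wmod ω (|v - u|) := by
          apply intervalIntegral.integral_mono_on (by linarith) ibnd iW
          intro v hv
          have hvab : v ∈ Icc a b := hsub hv
          have := hf v hvab u hu
          rw [abs_sub_comm v u]
          calc ‖f u - f v‖ ≤ ω (|u - v|) := this
            _ = Wmod ω (|u - v|) := (Wmod.eq_of_nonneg (abs_nonneg _)).symm
      _ ≤ ∫ s in (δ-h)..(δ+h), Wmod ω s := key_ub hω hh hδh hTu
      _ = ∫ s in (δ-h)..(δ+h), ω s := by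
          apply intervalIntegral.integral_congr
          intro s hs
          rw [uIcc_of_le (by linarith)] at hs
          exact Wmod.eq_of_nonneg (by linarith [hs.1])
  · -- lower bound
    intro t hadm Φ c hc
    obtain ⟨x0, hx0⟩ := exists_ne (0 : E)
    set e : E := ‖x0‖⁻¹ • x0 with hedef
    have he : ‖e‖ = 1 := by
      rw [hedef, norm_smul, norm_inv, norm_norm]
      field_simp [norm_ne_zero_iff.2 hx0]
    obtain ⟨F, u₀, hu₀, hHW, hmeans, hval⟩ := extremal_exists hω hadm hh hn hδh hδeq
    set f₁ : ℝ → E := fun v => F v • e with hf₁def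
    set f₂ : ℝ → E := fun v => -(F v • e) with hf₂def
    have hH1 : HHolder ω a b f₁ := by
      intro s hs t' ht'
      show ‖F t' • e - F s • e‖ ≤ ω (|t' - s|)
      rw [← sub_smul, norm_smul, he, mul_one, Real.norm_eq_abs]
      have h1 := hHW t' ht' s hs
      rwa [Wmod.eq_of_nonneg (abs_nonneg _)] at h1
    have hH2 : HHolder ω a b f₂ := by
      intro s hs t' ht'
      show ‖-(F t' • e) - -(F s • e)‖ ≤ ω (|t' - s|)
      have e1 : -(F t' • e) - -(F s • e) = F s • e - F t' • e := by abel
      rw [e1, ← sub_smul, norm_smul, he, mul_one, Real.norm_eq_abs]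
      have h1 := hHW s hs t' ht'
      rw [Wmod.eq_of_nonneg (abs_nonneg _)] at h1
      rw [abs_sub_comm t' s]
      exact h1
    have hm0 : ∀ i : Fin n, (∫ v in (t ((i:ℕ)+1) - h)..(t ((i:ℕ)+1) + h), F v) = 0 := by
      intro i
      have := i.isLt
      exact hmeans ((i:ℕ)+1) (by omega) (by omega)
    have hminfo1 : meanInfo h n t f₁ = fun _ => 0 := by
      funext i
      show (1 / (2*h)) • (∫ v in (t ((i:ℕ)+1) - h)..(t ((i:ℕ)+1) + h), F v • e) = 0
      rw [intervalIntegral.integral_smul_const, hm0 i, zero_smul, smul_zero]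
    have hminfo2 : meanInfo h n t f₂ = fun _ => 0 := by
      funext i
      show (1 / (2*h)) • (∫ v in (t ((i:ℕ)+1) - h)..(t ((i:ℕ)+1) + h), -(F v • e)) = 0
      rw [intervalIntegral.integral_neg, intervalIntegral.integral_smul_const, hm0 i,
        zero_smul, neg_zero, smul_zero]
    have hb1 := hc f₁ hH1 u₀ hu₀
    have hb2 := hc f₂ hH2 u₀ hu₀
    rw [hminfo1] at hb1
    rw [hminfo2] at hb2
    have hint0 : 0 ≤ ∫ s in (δ-h)..(δ+h), ω s := by
      apply intervalIntegral.integral_nonneg (by linarith)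
      intro s hs
      have h1 : ω 0 ≤ ω s := hω.2.2.1 (Set.mem_Ici.2 (le_refl 0)) (by simp [Set.mem_Ici]; linarith [hs.1]) (by linarith [hs.1])
      rw [hω.1] at h1
      exact h1
    have hF0 : 0 ≤ F u₀ := by nlinarith [hval]
    have hnorm : ‖f₁ u₀ - f₂ u₀‖ = 2 * F u₀ := by
      show ‖F u₀ • e - -(F u₀ • e)‖ = 2 * F u₀
      rw [sub_neg_eq_add, ← add_smul, norm_smul, he, mul_one, Real.norm_eq_abs,
        abs_of_nonneg (by linarith)]
      ring
    have htri : 2 * F u₀ ≤ 2 * c := by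
      have e1 : f₁ u₀ - f₂ u₀ = (f₁ u₀ - Φ (fun _ => 0) u₀) - (f₂ u₀ - Φ (fun _ => 0) u₀) := by
        abel
      have h2 : ‖f₁ u₀ - f₂ u₀‖ ≤ 2*c := by
        rw [e1]
        exact le_trans (norm_sub_le _ _) (by linarith)
      linarith [hnorm ▸ h2]
    calc (1/(2*h)) * ∫ s in (δ-h)..(δ+h), ω s ≤ (1/(2*h)) * (2*h*F u₀) := by
          apply mul_le_mul_of_nonneg_left hval (by positivity)
      _ = F u₀ := by field_simp
      _ ≤ c := by linarith
end
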